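/- arXiv:1211.0054 — 8 statements merged into one kernel-verified Lean document; each statement's English description precedes it below -/
import Mathlib

section
/- If C has enough injectives, then for any additive F : C → D and any left exact G : C → D, there is an isomorphism Nat(F, G) ≅ Nat(R⁰F, G), natural in F and G, induced by the canonical morphism F → R⁰F. Equivalently, R⁰ is left adjoint to the inclusion of left exact functors into (C, D). -/
open CategoryTheory CategoryTheory.Limits

universe v₁ v₂ u₁ u₂

variable {C : Type u₁} {D : Type u₂} [Category.{v₁} C] [Category.{v₂} D] [Abelian C] [Abelian D]

/-- `R` is a zeroth right derived functor of `F`, i.e. there is a canonical morphism `F ⟶ R`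
which is an isomorphism on injectives, and for every injective copresentation
`0 → X → I⁰ → I¹` the sequence `0 → R(X) → R(I⁰) → R(I¹)` is exact (so that, via the
isomorphisms `R(Iʲ) ≅ F(Iʲ)`, `R(X)` is the kernel of `F(I⁰) → F(I¹)`). -/
structure IsZerothRightDerivedFunctor (F R : C ⥤ D) [F.Additive] [R.Additive] where
  unit : F ⟶ R
  isIso_unit_app_of_injective : ∀ (I : C) [Injective I], IsIso (unit.app I)
  isKernel : ∀ {X I0 I1 : C} (i : X ⟶ I0) (d : I0 ⟶ I1) [Injective I0] [Injective I1]
    [Mono i] (w : i ≫ d = 0), (ShortComplex.mk i d w).Exact →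
    Nonempty (IsLimit (KernelFork.ofι (R.map i)
      (by rw [← R.map_comp, w, R.map_zero])))

/-- A functor is left exact if it sends short exact sequences `0 → A → B → C → 0`
to exact sequences `0 → G(A) → G(B) → G(C)`. -/
def IsLeftExactFunctor (G : C ⥤ D) [G.Additive] : Prop :=
  ∀ S : ShortComplex C, S.ShortExact → Mono (S.map G).f ∧ (S.map G).Exact

section Aux

variable [EnoughInjectives C]

/-- The standard injective copresentation differential `I⁰ X ⟶ I¹ X`. -/
noncomputable abbrev auxD (X : C) :
    Injective.under X ⟶ Injective.under (cokernel (Injective.ι X)) :=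
  cokernel.π (Injective.ι X) ≫ Injective.ι _

lemma auxW (X : C) : Injective.ι X ≫ auxD X = 0 := by
  rw [← Category.assoc, cokernel.condition, zero_comp]

/-- The left exact functor `G` sends the standard copresentation to a kernel diagram. -/
noncomputable def auxGIsKernel (G : C ⥤ D) [G.Additive] (hG : IsLeftExactFunctor G) (X : C) :
    IsLimit (KernelFork.ofι (G.map (Injective.ι X))
      (by rw [← G.map_comp, auxW, G.map_zero])) := by
  set S := ShortComplex.mk (Injective.ι X) (cokernel.π (Injective.ι X))
    (cokernel.condition _) with hS
  have hSE : S.ShortExact :=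
    { exact := ShortComplex.exact_of_g_is_cokernel _ (cokernelIsCokernel _) }
  haveI : Mono (S.map G).f := (hG S hSE).1
  have k1 : IsLimit (KernelFork.ofι (S.map G).f (S.map G).zero) := (hG S hSE).2.fIsKernel
  have hSQ : (ShortComplex.mk (Injective.ι (cokernel (Injective.ι X)))
      (cokernel.π _) (cokernel.condition _)).ShortExact :=
    { exact := ShortComplex.exact_of_g_is_cokernel _ (cokernelIsCokernel _) }
  haveI : Mono (G.map (Injective.ι (cokernel (Injective.ι X)))) := (hG _ hSQ).1
  exact isKernelCompMono k1 (G.map (Injective.ι _)) (hg := this) (G.map_comp _ _)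

end Aux

/-- If `C` has enough injectives, then for any additive `F : C ⥤ D` and any left
exact `G : C ⥤ D`, precomposition with the canonical morphism `F ⟶ R⁰F` gives a bijection
`Nat(R⁰F, G) ≅ Nat(F, G)`; i.e. `R⁰` is left adjoint to the inclusion of left exact functors. -/
theorem zerothRightDerived_adjunction_bijection [EnoughInjectives C]
    (F R G : C ⥤ D) [F.Additive] [R.Additive] [G.Additive]
    (hR : IsZerothRightDerivedFunctor F R)
    (hG : IsLeftExactFunctor G) :
    Function.Bijective (fun (α : R ⟶ G) => hR.unit ≫ α) := by
  have monoG : ∀ {A B : C} (m : A ⟶ B) [Mono m], Mono (G.map m) := by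
    intro A B m hm
    have hSE : (ShortComplex.mk m (cokernel.π m) (cokernel.condition m)).ShortExact :=
      { exact := ShortComplex.exact_of_g_is_cokernel _ (cokernelIsCokernel _) }
    exact (hG _ hSE).1
  haveI := hR.isIso_unit_app_of_injective
  have hinv : ∀ {A B : C} (g : A ⟶ B) [Injective A] [Injective B],
      inv (hR.unit.app A) ≫ F.map g = R.map g ≫ inv (hR.unit.app B) := by
    intro A B g _ _
    rw [IsIso.inv_comp_eq, ← Category.assoc, IsIso.eq_comp_inv]
    exact hR.unit.naturality g
  constructor
  · intro α β hαβ
    ext X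
    haveI : Mono (G.map (Injective.ι X)) := monoG _
    rw [← cancel_mono (G.map (Injective.ι X)), ← α.naturality, ← β.naturality]
    have happ : hR.unit.app (Injective.under X) ≫ α.app (Injective.under X) =
        hR.unit.app (Injective.under X) ≫ β.app (Injective.under X) :=
      congrArg (fun (t : F ⟶ G) => t.app (Injective.under X)) hαβ
    rw [cancel_epi (hR.unit.app (Injective.under X))] at happ
    rw [happ]
  · intro β
    haveI : ∀ X : C, Mono (G.map (Injective.ι X)) := fun X => monoG _
    let kG := auxGIsKernel G hG
    let t : ∀ X : C, R.obj X ⟶ G.obj (Injective.under X) := fun X =>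
      R.map (Injective.ι X) ≫ inv (hR.unit.app (Injective.under X)) ≫
        β.app (Injective.under X)
    have ht : ∀ X : C, t X ≫ G.map (auxD X) = 0 := by
      intro X
      simp only [t, Category.assoc]
      rw [← β.naturality (auxD X), reassoc_of% (hinv (auxD X)), ← R.map_comp_assoc,
        auxW, R.map_zero, zero_comp]
    let α : ∀ X : C, R.obj X ⟶ G.obj X := fun X =>
      (kG X).lift (KernelFork.ofι (t X) (ht X))
    have hα : ∀ X : C, α X ≫ G.map (Injective.ι X) = t X := fun X => by
      simpa using (kG X).fac (KernelFork.ofι (t X) (ht X)) WalkingParallelPair.zero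
    have key : ∀ {X Y : C} (f : X ⟶ Y), R.map f ≫ α Y = α X ≫ G.map f := by
      intro X Y f
      set g := Injective.factorThru (f ≫ Injective.ι Y) (Injective.ι X) with hg
      have hfac : Injective.ι X ≫ g = f ≫ Injective.ι Y := Injective.comp_factorThru _ _
      rw [← cancel_mono (G.map (Injective.ι Y))]
      calc (R.map f ≫ α Y) ≫ G.map (Injective.ι Y)
          = R.map f ≫ t Y := by rw [Category.assoc, hα]
        _ = R.map (Injective.ι X) ≫ R.map g ≫ inv (hR.unit.app (Injective.under Y)) ≫
              β.app (Injective.under Y) := by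
            simp only [t, ← R.map_comp_assoc, hfac]
        _ = R.map (Injective.ι X) ≫ inv (hR.unit.app (Injective.under X)) ≫
              F.map g ≫ β.app (Injective.under Y) := by
            rw [reassoc_of% (hinv g)]
        _ = t X ≫ G.map g := by
            simp only [t, Category.assoc, ← β.naturality g]
        _ = (α X ≫ G.map (Injective.ι X)) ≫ G.map g := by rw [hα]
        _ = (α X ≫ G.map f) ≫ G.map (Injective.ι Y) := by
            simp only [Category.assoc, ← G.map_comp, hfac]
    refine ⟨⟨α, fun {X Y} f => key f⟩, ?_⟩
    ext X
    simp only [NatTrans.comp_app]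
    rw [← cancel_mono (G.map (Injective.ι X)), Category.assoc, hα]
    simp only [t]
    rw [← hR.unit.naturality_assoc, IsIso.hom_inv_id_assoc]
    exact β.naturality (Injective.ι X)
end

section
/- Every projective object of the category fp(C, Ab) of coherent functors is representable. -/
open CategoryTheory CategoryTheory.Limits Opposite

universe v u

variable (C : Type u) [Category.{v} C] [Abelian C]

/-- A functor `F : C ⥤ Ab` is coherent (finitely presented) if it admits a presentation
`Hom(Y,-) → Hom(X,-) → F → 0`; by the Yoneda lemma the first map is induced by some
`f : X ⟶ Y`. -/
def IsCoherent (F : C ⥤ AddCommGrpCat.{v}) : Prop :=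
  ∃ (X Y : C) (f : X ⟶ Y) (α : preadditiveCoyoneda.obj (op X) ⟶ F)
    (w : preadditiveCoyoneda.map f.op ≫ α = 0),
    Epi α ∧ (ShortComplex.mk (preadditiveCoyoneda.map f.op) α w).Exact

/-- The category `fp(C, Ab)` of coherent functors, as a full subcategory of `(C, Ab)`. -/
abbrev Fp := ObjectProperty.FullSubcategory (IsCoherent C)

/-- Representable functors are coherent. -/
lemma isCoherent_preadditiveCoyoneda (X : C) :
    IsCoherent C (preadditiveCoyoneda.obj (op X)) := by
  refine ⟨X, X, 0, 𝟙 _, ?_, inferInstance, ?_⟩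
  · have : preadditiveCoyoneda.map (0 : X ⟶ X).op = 0 := by
      have : (0 : X ⟶ X).op = (0 : op X ⟶ op X) := rfl
      rw [this]
      exact Functor.map_zero _ _ _
    rw [this, Limits.zero_comp]
  · have h0 : (ShortComplex.mk (preadditiveCoyoneda.map (0 : X ⟶ X).op)
        (𝟙 (preadditiveCoyoneda.obj (op X))) (by
          have : (0 : X ⟶ X).op = (0 : op X ⟶ op X) := rfl
          rw [this, Functor.map_zero, Limits.zero_comp])).f = 0 := by
      have : (0 : X ⟶ X).op = (0 : op X ⟶ op X) := rfl
      simp [this]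
    rw [ShortComplex.exact_iff_mono _ h0]
    infer_instance

/-- Every projective object of the category `fp(C, Ab)` of coherent functors is
representable. -/
theorem projective_coherent_is_representable (F : Fp C) (hF : Projective F) :
    ∃ X : C, Nonempty (F.obj ≅ preadditiveCoyoneda.obj (op X)) := by
  obtain ⟨X, Y, f, α, w, hepi, hex⟩ := F.property
  let H : Fp C := ⟨preadditiveCoyoneda.obj (op X), isCoherent_preadditiveCoyoneda C X⟩
  let α' : H ⟶ F := ObjectProperty.homMk α
  have hepi' : Epi α' := ⟨fun g h hgh => ObjectProperty.hom_ext _ (hepi.left_cancellation g.hom h.hom (congrArg InducedCategory.Hom.hom hgh))⟩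
  obtain ⟨s, hs⟩ := Projective.factors (𝟙 F) α'
  -- s : F ⟶ H, hs : s ≫ α' = 𝟙 F (in Fp, hence in the functor category)
  let s' : F.obj ⟶ preadditiveCoyoneda.obj (op X) := s.hom
  have hs' : s' ≫ α = 𝟙 F.obj := congrArg InducedCategory.Hom.hom hs
  -- the idempotent
  let e : preadditiveCoyoneda.obj (op X) ⟶ preadditiveCoyoneda.obj (op X) := α ≫ s'
  have he : e ≫ e = e := by
    simp only [e, Category.assoc]
    rw [← Category.assoc s' α s', hs', Category.id_comp]
  -- e comes from an idempotent on X
  obtain ⟨g, hg⟩ := preadditiveCoyoneda.map_surjective (X := op X) (Y := op X) e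
  let p : X ⟶ X := g.unop
  have hp : p ≫ p = p := by
    have : preadditiveCoyoneda.map ((p ≫ p).op) = preadditiveCoyoneda.map p.op := by
      rw [op_comp, Functor.map_comp]
      show preadditiveCoyoneda.map g ≫ preadditiveCoyoneda.map g = preadditiveCoyoneda.map g
      rw [hg]; exact he
    exact Quiver.Hom.op_inj (preadditiveCoyoneda.map_injective this)
  -- split the idempotent in C
  obtain ⟨K, i, r, hir, hri⟩ := IsIdempotentComplete.idempotents_split X p hp
  have hpe : preadditiveCoyoneda.map p.op = e := by
    have : p.op = g := Quiver.Hom.op_unop g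
    rw [this]; exact hg
  have h1 : preadditiveCoyoneda.map i.op ≫ preadditiveCoyoneda.map r.op = e := by
    rw [← Functor.map_comp, ← op_comp, hri]; exact hpe
  have h2 : preadditiveCoyoneda.map r.op ≫ preadditiveCoyoneda.map i.op = 𝟙 _ := by
    rw [← Functor.map_comp, ← op_comp, hir]
    exact preadditiveCoyoneda.map_id (op K)
  -- i : K ⟶ X, r : X ⟶ K, i ≫ r = 𝟙 K, r ≫ i = p
  refine ⟨K, ⟨?_⟩⟩
  -- maps: s' ≫ G(i.op) : F.obj ⟶ G(op K), G(r.op) ≫ α : G(op K) ⟶ F.obj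
  refine ⟨s' ≫ preadditiveCoyoneda.map i.op, preadditiveCoyoneda.map r.op ≫ α, ?_, ?_⟩
  · calc (s' ≫ preadditiveCoyoneda.map i.op) ≫ preadditiveCoyoneda.map r.op ≫ α
        = s' ≫ (preadditiveCoyoneda.map i.op ≫ preadditiveCoyoneda.map r.op) ≫ α := by
          simp only [Category.assoc]
      _ = s' ≫ e ≫ α := by rw [h1]
      _ = s' ≫ (α ≫ s') ≫ α := rfl
      _ = (s' ≫ α) ≫ (s' ≫ α) := by simp only [Category.assoc]
      _ = 𝟙 F.obj := by rw [hs', Category.id_comp]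
  · calc (preadditiveCoyoneda.map r.op ≫ α) ≫ s' ≫ preadditiveCoyoneda.map i.op
        = preadditiveCoyoneda.map r.op ≫ (α ≫ s') ≫ preadditiveCoyoneda.map i.op := by
          simp only [Category.assoc]
      _ = preadditiveCoyoneda.map r.op ≫ e ≫ preadditiveCoyoneda.map i.op := rfl
      _ = preadditiveCoyoneda.map r.op ≫ (preadditiveCoyoneda.map i.op ≫
            preadditiveCoyoneda.map r.op) ≫ preadditiveCoyoneda.map i.op := by rw [h1]
      _ = (preadditiveCoyoneda.map r.op ≫ preadditiveCoyoneda.map i.op) ≫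
            (preadditiveCoyoneda.map r.op ≫ preadditiveCoyoneda.map i.op) := by
          simp only [Category.assoc]
      _ = 𝟙 _ := by rw [h2, Category.id_comp]
end

section
/- An object F of fp(C, Ab) is projective if and only if it is representable, if and only if it is left exact. -/
open CategoryTheory CategoryTheory.Limits Opposite

universe v u

variable (C : Type u) [Category.{v} C] [Abelian C]

section Aux

set_option linter.unusedSectionVars false
set_option maxHeartbeats 1000000

open ZeroObject

variable {C}

noncomputable section

lemma nat_app {M N : C ⥤ AddCommGrpCat.{v}} (σ : M ⟶ N) {T T' : C} (u : T ⟶ T') (x : M.obj T) :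
    σ.app T' (M.map u x) = N.map u (σ.app T x) := by
  rw [← comp_apply, σ.naturality u, comp_apply]

lemma app_surjective {G H : C ⥤ AddCommGrpCat.{v}} (e : G ⟶ H) [Epi e] (T : C) :
    Function.Surjective (e.app T) := by
  rw [← AddCommGrpCat.epi_iff_surjective]
  exact (NatTrans.epi_iff_epi_app e).1 ‹_› T

lemma coherent_map_add {G : C ⥤ AddCommGrpCat.{v}} (hG : IsCoherent C G) {T T' : C}
    (a b : T ⟶ T') (x : G.obj T) : G.map (a + b) x = G.map a x + G.map b x := by
  obtain ⟨A, B, g, β, w, hβ, hex⟩ := hG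
  haveI := hβ
  obtain ⟨y, rfl⟩ := app_surjective β T x
  change A ⟶ T at y
  have key : ∀ (u : T ⟶ T'), G.map u (β.app T y) = β.app T' (y ≫ u) := fun u =>
    (nat_app β u y).symm
  erw [key, key, key, ← map_add]
  congr 1
  exact Preadditive.comp_add _ _ _ _ _ _

/-- The natural transformation `Hom(W,-) ⟶ G` associated to an element `t : G.obj W`. -/
def ofElem {G : C ⥤ AddCommGrpCat.{v}} (hG : IsCoherent C G) {W : C} (t : G.obj W) :
    (preadditiveCoyoneda.obj (op W) : C ⥤ AddCommGrpCat.{v}) ⟶ G where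
  app T := AddCommGrpCat.ofHom (AddMonoidHom.mk' (fun a => G.map a t) (fun a b => coherent_map_add hG a b t))
  naturality T T' u := by
    ext a
    change W ⟶ T at a
    show G.map (a ≫ u) t = G.map u (G.map a t)
    rw [G.map_comp, comp_apply]

@[simp] lemma ofElem_app {G : C ⥤ AddCommGrpCat.{v}} (hG : IsCoherent C G) {W : C} (t : G.obj W)
    {T : C} (a : W ⟶ T) : (ofElem hG t).app T a = G.map a t := rfl

lemma app_eq_of_coyoneda {M : C ⥤ AddCommGrpCat.{v}} {W : C}
    (σ : (preadditiveCoyoneda.obj (op W) : C ⥤ AddCommGrpCat.{v}) ⟶ M) {T : C} (a : W ⟶ T) :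
    σ.app T a = M.map a (σ.app W (𝟙 W)) := by
  have h := nat_app σ a (𝟙 W)
  have h2 : (preadditiveCoyoneda.obj (op W) : C ⥤ AddCommGrpCat.{v}).map a (𝟙 W) = a :=
    Category.id_comp a
  rw [h2] at h
  exact h.symm ▸ h

lemma exact_eval_iff (S : ShortComplex (C ⥤ AddCommGrpCat.{v})) :
    S.Exact ↔ ∀ (T : C) (y : S.X₂.obj T), S.g.app T y = 0 →
      ∃ x : S.X₁.obj T, S.f.app T x = y := by
  have hPH : ∀ T : C, ((evaluation C AddCommGrpCat.{v}).obj T).PreservesHomology := fun T =>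
    CategoryTheory.Functor.preservesHomologyOfExact _
  constructor
  · intro h T y hy
    have h' := h.map ((evaluation C AddCommGrpCat.{v}).obj T)
    rw [ShortComplex.ab_exact_iff] at h'
    exact h' y hy
  · intro h
    rw [ShortComplex.exact_iff_isZero_homology]
    apply Functor.isZero
    intro T
    have h' : (S.map ((evaluation C AddCommGrpCat.{v}).obj T)).Exact := by
      rw [ShortComplex.ab_exact_iff]
      exact h T
    rw [ShortComplex.exact_iff_isZero_homology] at h'
    exact h'.of_iso (S.mapHomologyIso ((evaluation C AddCommGrpCat.{v}).obj T)).symm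


lemma isCoherent_coyoneda (X : C) :
    IsCoherent C (preadditiveCoyoneda.obj (op X) : C ⥤ AddCommGrpCat.{v}) := by
  refine ⟨X, 0, 0, 𝟙 _, ?_, inferInstance, ?_⟩
  · ext T g
    change (0 : C) ⟶ T at g
    show (0 : X ⟶ (0 : C)) ≫ g = 0
    exact zero_comp
  · rw [exact_eval_iff]
    intro T y hy
    refine ⟨0, ?_⟩
    have hy0 : y = 0 := by simpa using hy
    rw [hy0, map_zero]


lemma isCoherent_cokernel {G H : C ⥤ AddCommGrpCat.{v}} (hG : IsCoherent C G)
    (hH : IsCoherent C H) (e : G ⟶ H) : IsCoherent C (cokernel e) := by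
  obtain ⟨X, Y, f, α, w, hα, hex⟩ := hH
  obtain ⟨A, B, g, β, hw, hβ, hexG⟩ := hG
  haveI := hα; haveI := hβ
  set π : H ⟶ cokernel e := cokernel.π e with hπdef
  have hπe : ∀ (T : C) (x : G.obj T), π.app T (e.app T x) = 0 := by
    intro T x
    have h : e.app T ≫ π.app T = 0 := by
      rw [← NatTrans.comp_app, cokernel.condition]
      rfl
    have := ConcreteCategory.congr_hom h x
    simpa using this
  -- the element of `H.obj A` classifying `β ≫ e`
  obtain ⟨a, ha⟩ := app_surjective α A ((β ≫ e).app A (𝟙 A))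
  change X ⟶ A at a
  -- the new presentation
  refine ⟨X, Y ⊞ A, biprod.lift f a, α ≫ π, ?_, epi_comp _ _, ?_⟩
  · ext T u
    change Y ⊞ A ⟶ T at u
    show (α ≫ π).app T (biprod.lift f a ≫ u) = 0
    have hu : biprod.lift f a ≫ u = f ≫ (biprod.inl ≫ u) + a ≫ (biprod.inr ≫ u) := by
      conv_lhs => rw [show u = biprod.desc (biprod.inl ≫ u) (biprod.inr ≫ u) by
        apply biprod.hom_ext' <;> simp]
      rw [biprod.lift_desc]
    erw [hu, NatTrans.comp_app, comp_apply, map_add]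
    have h1 : α.app T (f ≫ (biprod.inl ≫ u)) = 0 := by
      have := ConcreteCategory.congr_hom (NatTrans.congr_app w T) (biprod.inl ≫ u : Y ⟶ T)
      exact this
    have h2 : α.app T (a ≫ (biprod.inr ≫ u)) = (β ≫ e).app T (biprod.inr ≫ u) := by
      have hn : α.app T ((preadditiveCoyoneda.obj (op X) : C ⥤ AddCommGrpCat.{v}).map
          (biprod.inr ≫ u) a) = H.map (biprod.inr ≫ u) (α.app A a) := nat_app α _ a
      rw [show α.app T (a ≫ (biprod.inr ≫ u)) = H.map (biprod.inr ≫ u) (α.app A a) from hn,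
        ha, app_eq_of_coyoneda (β ≫ e) (biprod.inr ≫ u)]
    rw [h1, h2, zero_add]
    exact hπe T (β.app T (biprod.inr ≫ u))
  · rw [exact_eval_iff]
    intro T m hm
    change X ⟶ T at m
    -- `hm : π.app T (α.app T m) = 0`
    have hm' : π.app T (α.app T m) = 0 := by exact hm
    -- exactness of `G ⟶ H ⟶ cokernel e` pointwise
    have hcoker : (ShortComplex.mk e π (cokernel.condition e)).Exact :=
      ShortComplex.exact_of_g_is_cokernel _ (cokernelIsCokernel e)
    rw [exact_eval_iff] at hcoker
    obtain ⟨t, ht⟩ := hcoker T (α.app T m) hm'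
    obtain ⟨u₂, rfl⟩ := app_surjective β T t
    have h2 : e.app T (β.app T u₂) = (β ≫ e).app T u₂ := rfl
    have h3 : α.app T m = α.app T (a ≫ u₂) := by
      rw [← ht, h2, app_eq_of_coyoneda (β ≫ e) u₂, ← ha]
      exact (nat_app α u₂ a).symm
    have h4 : α.app T (m - a ≫ u₂) = 0 := by
      erw [map_sub, ← h3, sub_self]
    rw [exact_eval_iff] at hex
    obtain ⟨u₁, hu₁⟩ := hex T (m - a ≫ u₂) h4
    change Y ⟶ T at u₁
    change A ⟶ T at u₂
    refine ⟨biprod.desc u₁ u₂, ?_⟩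
    show biprod.lift f a ≫ biprod.desc u₁ u₂ = m
    rw [biprod.lift_desc]
    have hu₁' : f ≫ u₁ = m - a ≫ u₂ := hu₁
    rw [hu₁']
    abel

lemma epi_incl_of_epi {G H : Fp C} (e : G ⟶ H) [Epi e] :
    Epi ((ObjectProperty.ι (IsCoherent C)).map e) := by
  let e' : G.obj ⟶ H.obj := e.hom
  let Qfp : Fp C := ⟨cokernel e', isCoherent_cokernel G.property H.property e'⟩
  let π' : H ⟶ Qfp := ObjectProperty.homMk (cokernel.π e')
  let z : H ⟶ Qfp := ObjectProperty.homMk (0 : H.obj ⟶ cokernel e')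
  have hcomp : e ≫ π' = e ≫ z := by
    ext1
    show e' ≫ cokernel.π e' = e' ≫ (0 : H.obj ⟶ cokernel e')
    rw [cokernel.condition, comp_zero]
  have hπ0 : cokernel.π e' = (0 : H.obj ⟶ cokernel e') :=
    congr_arg (fun φ => φ.hom) ((cancel_epi e).mp hcomp)
  show Epi e'
  apply Preadditive.epi_of_cancel_zero
  intro Z h hh
  rw [← cokernel.π_desc e' h hh, hπ0, zero_comp]

lemma projective_of_rep (F : Fp C)
    (h : ∃ X : C, Nonempty (F.obj ≅ preadditiveCoyoneda.obj (op X))) : Projective F := by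
  obtain ⟨W, ⟨ψ⟩⟩ := h
  constructor
  intro E Z f e he
  haveI : Epi ((ObjectProperty.ι (IsCoherent C)).map e) := epi_incl_of_epi e
  let e' : E.obj ⟶ Z.obj := e.hom
  let f' : F.obj ⟶ Z.obj := f.hom
  let χ : (preadditiveCoyoneda.obj (op W) : C ⥤ AddCommGrpCat.{v}) ⟶ Z.obj := ψ.inv ≫ f'
  obtain ⟨t, ht⟩ := app_surjective ((ObjectProperty.ι (IsCoherent C)).map e) W
    (χ.app W (𝟙 W))
  let τ := ofElem E.property t
  have ht' : e'.app W t = χ.app W (𝟙 W) := ht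
  have hτ : τ ≫ e' = χ := by
    ext T a
    change W ⟶ T at a
    show e'.app T (E.obj.map a t) = χ.app T a
    rw [nat_app e' a t]
    change Z.obj.map a (e'.app W t) = _
    rw [ht', ← app_eq_of_coyoneda χ a]
  refine ⟨ObjectProperty.homMk (ψ.hom ≫ τ : F.obj ⟶ E.obj), ?_⟩
  ext1
  show (ψ.hom ≫ τ) ≫ e' = f'
  rw [Category.assoc, hτ]
  show ψ.hom ≫ ψ.inv ≫ f' = f'
  rw [Iso.hom_inv_id_assoc]

lemma rep_of_projective (F : Fp C) (hP : Projective F) :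
    ∃ X : C, Nonempty (F.obj ≅ preadditiveCoyoneda.obj (op X)) := by
  obtain ⟨X, Y, f, α, w, hα, hex⟩ := F.property
  haveI := hα
  let R : Fp C := ⟨_, isCoherent_coyoneda X⟩
  let α' : R ⟶ F := ObjectProperty.homMk α
  haveI : Epi α' := ⟨fun u v huv =>
    ObjectProperty.hom_ext _ ((cancel_epi α).mp (congr_arg (fun φ => φ.hom) huv))⟩
  let s : F ⟶ R := Projective.factorThru (𝟙 F) α'
  have hs : s ≫ α' = 𝟙 F := Projective.factorThru_comp _ _
  let s' : F.obj ⟶ (preadditiveCoyoneda.obj (op X) : C ⥤ AddCommGrpCat.{v}) := s.hom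
  have hsα : s' ≫ α = 𝟙 F.obj := congr_arg (fun φ => φ.hom) hs
  let q : (preadditiveCoyoneda.obj (op X) : C ⥤ AddCommGrpCat.{v}) ⟶ _ := α ≫ s'
  let e₀ : X ⟶ X := q.app X (𝟙 X)
  have hq : ∀ {T : C} (b : X ⟶ T), q.app T b = e₀ ≫ b := fun {T} b => app_eq_of_coyoneda q b
  have hqq : q ≫ q = q := by
    show (α ≫ s') ≫ α ≫ s' = α ≫ s'
    rw [Category.assoc, ← Category.assoc s' α s', hsα, Category.id_comp]
  have he₀ : e₀ ≫ e₀ = e₀ := by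
    have h1 : e₀ ≫ e₀ = q.app X e₀ := (hq e₀).symm
    have h2 : (q ≫ q).app X (𝟙 X) = q.app X e₀ := by
      rw [NatTrans.comp_app]; rfl
    rw [h1, ← h2, hqq]
  -- split the idempotent
  let W := kernel (𝟙 X - e₀)
  let i : W ⟶ X := kernel.ι _
  let p : X ⟶ W := kernel.lift _ e₀ (by rw [Preadditive.comp_sub, Category.comp_id, he₀, sub_self])
  have hpi : p ≫ i = e₀ := kernel.lift_ι _ _ _
  have hie : i ≫ e₀ = i := by
    have hk := kernel.condition (𝟙 X - e₀)
    rw [Preadditive.comp_sub, Category.comp_id, sub_eq_zero] at hk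
    exact hk.symm
  have hip : i ≫ p = 𝟙 W := by
    rw [← cancel_mono i, Category.assoc, hpi, hie, Category.id_comp]
  have hmapeq : preadditiveCoyoneda.map e₀.op = q := by
    ext T b
    change X ⟶ T at b
    show e₀ ≫ b = q.app T b
    rw [hq b]
  refine ⟨W, ⟨⟨s' ≫ preadditiveCoyoneda.map i.op, preadditiveCoyoneda.map p.op ≫ α, ?_, ?_⟩⟩⟩
  · rw [Category.assoc, ← Category.assoc (preadditiveCoyoneda.map i.op), ← Functor.map_comp]
    show s' ≫ preadditiveCoyoneda.map ((p ≫ i).op) ≫ α = 𝟙 F.obj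
    rw [hpi, hmapeq]
    show s' ≫ (α ≫ s') ≫ α = 𝟙 F.obj
    rw [Category.assoc, ← Category.assoc s' α, hsα, Category.id_comp]
  · show preadditiveCoyoneda.map p.op ≫ q ≫ preadditiveCoyoneda.map i.op = 𝟙 _
    rw [← hmapeq, ← Functor.map_comp, ← Functor.map_comp]
    show preadditiveCoyoneda.map (((i ≫ e₀) ≫ p).op) = 𝟙 _
    rw [hie, hip]
    simp

lemma preservesFiniteLimits_of_rep (F : Fp C)
    (h : ∃ X : C, Nonempty (F.obj ≅ preadditiveCoyoneda.obj (op X))) :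
    Nonempty (PreservesFiniteLimits F.obj) := by
  obtain ⟨X, ⟨ψ⟩⟩ := h
  haveI : PreservesFiniteLimits (preadditiveCoyoneda.obj (op X) : C ⥤ AddCommGrpCat.{v}) :=
    inferInstance
  exact ⟨preservesFiniteLimits_of_natIso ψ.symm⟩

lemma exists_preimage_kernel (F : C ⥤ AddCommGrpCat.{v}) [PreservesFiniteLimits F] {X Y : C}
    (f : X ⟶ Y) (x : F.obj X) (hx : F.map f x = 0) :
    ∃ z : F.obj (kernel f), F.map (kernel.ι f) z = x := by
  let u : AddCommGrpCat.of (ULift.{v} ℤ) ⟶ F.obj X :=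
    AddCommGrpCat.ofHom (((zmultiplesHom _) x).comp AddEquiv.ulift.toAddMonoidHom)
  have hu : u ≫ F.map f = 0 := by
    ext n
    show F.map f (u n) = 0
    have : u n = n.down • x := by
      simp [u, AddEquiv.ulift]
      rfl
    rw [this, map_zsmul, hx, smul_zero]
  let l := kernel.lift (F.map f) u hu
  refine ⟨inv (kernelComparison f F) (l (ULift.up 1)), ?_⟩
  have h1 : F.map (kernel.ι f) (inv (kernelComparison f F) (l (ULift.up 1)))
      = (inv (kernelComparison f F) ≫ kernelComparison f F ≫ kernel.ι (F.map f)) (l (ULift.up 1)) := by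
    rw [kernelComparison_comp_ι]
    rfl
  rw [h1, IsIso.inv_hom_id_assoc]
  have h2 : kernel.ι (F.map f) (l (ULift.up 1)) = u (ULift.up 1) := by
    rw [← comp_apply, kernel.lift_ι]
  rw [h2]
  show (1 : ℤ) • x = x
  simp

lemma rep_of_preservesFiniteLimits (F : Fp C) (h : Nonempty (PreservesFiniteLimits F.obj)) :
    ∃ X : C, Nonempty (F.obj ≅ preadditiveCoyoneda.obj (op X)) := by
  obtain ⟨hPFL⟩ := h
  obtain ⟨X, Y, f, α, w, hα, hex⟩ := F.property
  haveI := hα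
  haveI := hPFL
  let K := kernel f
  let i : K ⟶ X := kernel.ι f
  let ξ : F.obj.obj X := α.app X (𝟙 X)
  have hαid : ∀ {T : C} (m : X ⟶ T), α.app T m = F.obj.map m ξ := fun m =>
    app_eq_of_coyoneda α m
  have hξf : F.obj.map f ξ = 0 := by
    have hw : α.app Y (f ≫ 𝟙 Y) = 0 := ConcreteCategory.congr_hom (NatTrans.congr_app w Y) (𝟙 Y)
    rw [Category.comp_id] at hw
    rw [← hαid f, hw]
  obtain ⟨η, hη⟩ := exists_preimage_kernel F.obj f ξ hξf
  let τ := ofElem F.property η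
  have hsurj : ∀ (T : C), Function.Surjective (τ.app T) := by
    intro T x
    obtain ⟨m, rfl⟩ := app_surjective α T x
    change X ⟶ T at m
    refine ⟨i ≫ m, ?_⟩
    show F.obj.map (i ≫ m) η = α.app T m
    rw [F.obj.map_comp, comp_apply]
    change F.obj.map m (F.obj.map i η) = _
    rw [hη, hαid m]
  have hinj : ∀ (T : C), Function.Injective (τ.app T) := by
    intro T
    rw [injective_iff_map_eq_zero]
    intro a ha
    change K ⟶ T at a
    change F.obj.map a η = 0 at ha
    change (a : K ⟶ T) = 0
    let P := pushout i a
    let j : X ⟶ P := pushout.inl i a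
    let b : T ⟶ P := pushout.inr i a
    have hj : α.app P j = 0 := by
      rw [hαid j]
      have h1 : F.obj.map (i ≫ j) η = F.obj.map j ξ := by
        rw [F.obj.map_comp]
        change F.obj.map j (F.obj.map i η) = F.obj.map j ξ
        rw [hη]
      have h2 : (i ≫ j : K ⟶ P) = a ≫ b := pushout.condition
      rw [← h1, h2, F.obj.map_comp]
      change F.obj.map b (F.obj.map a η) = 0
      rw [ha, map_zero]
    rw [exact_eval_iff] at hex
    obtain ⟨u, hu⟩ := hex P j hj
    change Y ⟶ P at u
    have hfu : f ≫ u = j := hu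
    have hab : (a ≫ b : K ⟶ P) = 0 := by
      rw [← pushout.condition]
      show i ≫ j = 0
      rw [← hfu, ← Category.assoc, kernel.condition, zero_comp]
    haveI : Mono b := by
      show Mono (pushout.inr i a)
      infer_instance
    exact zero_of_comp_mono b hab
  haveI : ∀ (T : C), IsIso (τ.app T) := by
    intro T
    rw [ConcreteCategory.isIso_iff_bijective]
    exact ⟨hinj T, hsurj T⟩
  haveI : IsIso τ := NatIso.isIso_of_isIso_app τ
  exact ⟨K, ⟨(asIso τ).symm⟩⟩

end

end Aux

/-- An object `F` of `fp(C, Ab)` is projective iff it is representable iff it is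
left exact (here: preserves finite limits). -/
theorem coherent_projective_iff_representable_iff_leftExact (F : Fp C) :
    (Projective F ↔ ∃ X : C, Nonempty (F.obj ≅ preadditiveCoyoneda.obj (op X))) ∧
    (Projective F ↔ Nonempty (PreservesFiniteLimits F.obj)) := by
  constructor
  · exact ⟨rep_of_projective F, projective_of_rep F⟩
  · exact ⟨fun h => preservesFiniteLimits_of_rep F (rep_of_projective F h),
      fun h => projective_of_rep F (rep_of_preservesFiniteLimits F h)⟩
end

section
/- For a coherent functor F, w(F) = 0 if and only if there exists a short exact sequence 0 → X → Y → Z → 0 in C such that 0 → Hom(Z,-) → Hom(Y,-) → Hom(X,-) → F → 0 is exact; moreover, any coherent functor F with w(F) = 0 vanishes on all injective objects of C. -/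
open CategoryTheory CategoryTheory.Limits Opposite

universe v u

variable (C : Type u) [Category.{v} C] [Abelian C]

/-- Exactness in the functor category `C ⥤ Ab` is detected pointwise. -/
lemma functor_exact_iff_eval (S : ShortComplex (C ⥤ AddCommGrpCat.{v})) :
    S.Exact ↔ ∀ T : C, (S.map ((evaluation C AddCommGrpCat.{v}).obj T)).Exact := by
  constructor
  · intro h T
    exact h.map _
  · intro h
    rw [ShortComplex.exact_iff_isZero_homology]
    apply Functor.isZero
    intro T
    have h1 : IsZero ((S.map ((evaluation C AddCommGrpCat.{v}).obj T)).homology) := by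
      rw [← ShortComplex.exact_iff_isZero_homology]; exact h T
    exact IsZero.of_iso h1 (S.mapHomologyIso ((evaluation C AddCommGrpCat.{v}).obj T)).symm

/-- A natural transformation out of a preadditive corepresentable functor is determined by
its value at the identity. -/
lemma coyoneda_nat_apply {C : Type u} [Category.{v} C] [Preadditive C]
    (F : C ⥤ AddCommGrpCat.{v}) (X : C) (α : preadditiveCoyoneda.obj (op X) ⟶ F)
    (T : C) (g : X ⟶ T) :
    α.app T g = F.map g (α.app X (𝟙 X)) := by
  have h1 := ConcreteCategory.congr_hom (α.naturality g) (𝟙 X)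
  exact (congrArg (α.app T) (Category.id_comp g)).symm.trans h1

/-- For a coherent functor `F` with presentation induced by `f : X ⟶ Y` (so that
`w(F) = ker f`), `w(F) = 0` iff there is a short exact sequence `0 → X' → Y' → Z' → 0` in `C`
with `0 → Hom(Z',-) → Hom(Y',-) → Hom(X',-) → F → 0` exact; moreover if `w(F) = 0` then `F`
vanishes on all injectives of `C`. -/
theorem defect_zero_iff_four_term_resolution
    (F : C ⥤ AddCommGrpCat.{v}) (X Y : C) (f : X ⟶ Y)
    (α : preadditiveCoyoneda.obj (op X) ⟶ F)
    (hw : preadditiveCoyoneda.map f.op ≫ α = 0) (hα : Epi α)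
    (hex : (ShortComplex.mk (preadditiveCoyoneda.map f.op) α hw).Exact) :
    (IsZero (kernel f) ↔
      ∃ (X' Y' Z' : C) (a : X' ⟶ Y') (b : Y' ⟶ Z') (hab : a ≫ b = 0)
        (β : preadditiveCoyoneda.obj (op X') ⟶ F)
        (h₁ : preadditiveCoyoneda.map b.op ≫ preadditiveCoyoneda.map a.op = 0)
        (h₂ : preadditiveCoyoneda.map a.op ≫ β = 0),
        Mono a ∧ Epi b ∧ (ShortComplex.mk a b hab).Exact ∧
        Mono (preadditiveCoyoneda.map b.op) ∧
        (ShortComplex.mk (preadditiveCoyoneda.map b.op) (preadditiveCoyoneda.map a.op) h₁).Exact ∧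
        (ShortComplex.mk (preadditiveCoyoneda.map a.op) β h₂).Exact ∧ Epi β) ∧
    (IsZero (kernel f) → ∀ (I : C), Injective I → IsZero (F.obj I)) := by
  -- pointwise surjectivity of α
  have hαs : ∀ (T : C) (x : F.obj T), ∃ g : X ⟶ T, α.app T g = x := by
    intro T x
    have := (NatTrans.epi_iff_epi_app α).1 hα T
    exact (AddCommGrpCat.epi_iff_surjective _).1 this x
  -- pointwise exactness of the presentation via f
  have hexp : ∀ (T : C) (g : X ⟶ T), α.app T g = 0 → ∃ h : Y ⟶ T, f ≫ h = g := by
    intro T g hg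
    have h1 := ((functor_exact_iff_eval C _).1 hex T)
    rw [ShortComplex.ab_exact_iff] at h1
    obtain ⟨h, hh⟩ := h1 g hg
    exact ⟨h, hh⟩
  -- the "vanishing on injectives" part
  have hinj : IsZero (kernel f) → ∀ (I : C), Injective I → IsZero (F.obj I) := by
    intro hker I hI
    have hmono : Mono f := Preadditive.mono_of_isZero_kernel f hker
    have : ∀ x : F.obj I, x = 0 := by
      intro x
      obtain ⟨g, hg⟩ := hαs I x
      have hfac : f ≫ Injective.factorThru g f = g := Injective.comp_factorThru g f
      have h0 := ConcreteCategory.congr_hom (NatTrans.congr_app hw I) (show Y ⟶ I from Injective.factorThru g f)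
      rw [← hg, ← hfac]
      exact h0
    have : Subsingleton (F.obj I) := subsingleton_of_forall_eq 0 fun x => this x
    exact AddCommGrpCat.isZero_of_subsingleton _
  refine ⟨⟨?_, ?_⟩, hinj⟩
  · -- forward direction
    intro hker
    have hmono : Mono f := Preadditive.mono_of_isZero_kernel f hker
    refine ⟨X, Y, cokernel f, f, cokernel.π f, cokernel.condition f, α, ?_, hw,
      hmono, inferInstance, ?_, ?_, ?_, hex, hα⟩
    · -- h₁
      ext T g
      change f ≫ (cokernel.π f) ≫ (show cokernel f ⟶ T from g) = 0
      rw [cokernel.condition_assoc, zero_comp]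
    · -- short exact in C
      exact ShortComplex.exact_of_g_is_cokernel _ (cokernelIsCokernel f)
    · -- mono of Hom(π, -)
      rw [NatTrans.mono_iff_mono_app]
      intro T
      rw [AddCommGrpCat.mono_iff_injective]
      intro g₁ g₂ h12
      exact (cancel_epi (cokernel.π f)).1 h12
    · -- exactness of Hom(Z,-) → Hom(Y,-) → Hom(X,-)
      rw [functor_exact_iff_eval]
      intro T
      rw [ShortComplex.ab_exact_iff]
      intro (g : Y ⟶ T) (hg : f ≫ g = 0)
      exact ⟨cokernel.desc f g hg, cokernel.π_desc f g hg⟩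
  · -- backward direction
    rintro ⟨X', Y', Z', a, b, hab, β, h₁, h₂, ha, hb, habex, hmb, hexZ, hexb, hβ⟩
    -- pointwise surjectivity of β
    have hβs : ∀ (T : C) (x : F.obj T), ∃ g : X' ⟶ T, β.app T g = x := by
      intro T x
      have := (NatTrans.epi_iff_epi_app β).1 hβ T
      exact (AddCommGrpCat.epi_iff_surjective _).1 this x
    obtain ⟨u, hu⟩ := hαs X' (β.app X' (𝟙 X'))
    obtain ⟨v, hv⟩ := hβs X (α.app X (𝟙 X))
    -- α.app Y' (u ≫ a) = 0
    have hβa : β.app Y' a = 0 := by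
      have h0 := ConcreteCategory.congr_hom (NatTrans.congr_app h₂ Y') (𝟙 Y')
      exact (congrArg (β.app Y') (Category.comp_id a)).symm.trans h0
    have hua : α.app Y' (u ≫ a) = 0 := by
      rw [coyoneda_nat_apply F X α Y' (u ≫ a), F.map_comp]
      have : F.map u (α.app X (𝟙 X)) = α.app X' u := (coyoneda_nat_apply F X α X' u).symm
      rw [comp_apply, this, hu, ← coyoneda_nat_apply F X' β Y' a, hβa]
    obtain ⟨t, ht⟩ := hexp Y' (u ≫ a) hua
    -- α.app X (u ≫ v) = α.app X (𝟙 X)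
    have huv : α.app X (u ≫ v) = α.app X (𝟙 X) := by
      rw [coyoneda_nat_apply F X α X (u ≫ v), F.map_comp]
      have : F.map u (α.app X (𝟙 X)) = α.app X' u := (coyoneda_nat_apply F X α X' u).symm
      rw [comp_apply, this, hu, ← coyoneda_nat_apply F X' β X v, hv]
    have hsub : α.app X (u ≫ v - 𝟙 X) = 0 := by
      erw [map_sub, huv, sub_self]
    obtain ⟨r, hr⟩ := hexp X (u ≫ v - 𝟙 X) hsub
    have hmono : Mono f := by
      apply Preadditive.mono_of_cancel_zero
      intro T g hg
      have hgu : (g ≫ u) ≫ a = 0 := by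
        rw [Category.assoc, ← ht, ← Category.assoc, hg, zero_comp]
      have hgu0 : g ≫ u = 0 := by
        rw [← cancel_mono a, hgu, zero_comp]
      calc g = g ≫ 𝟙 X := (Category.comp_id g).symm
        _ = g ≫ (u ≫ v - f ≫ r) := by rw [hr]; simp
        _ = (g ≫ u) ≫ v - (g ≫ f) ≫ r := by
              rw [Preadditive.comp_sub, Category.assoc, Category.assoc]
        _ = 0 := by rw [hgu0, hg, zero_comp, zero_comp, sub_zero]
    exact IsZero.of_iso (isZero_zero C) (kernel.ofMono f)
end

section
/- Let F be a coherent functor on an abelian category C and G : C → Ab a left exact additive functor. Then there are isomorphisms G(w(F)) ≅ Nat(F, G), natural in F and G. -/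
open CategoryTheory CategoryTheory.Limits Opposite

universe v u

variable (C : Type u) [Category.{v} C] [Abelian C]

section Aux

variable {C}
variable (X : C) (G : C ⥤ AddCommGrpCat.{v}) [G.Additive]

/-- Yoneda-style naturality description. -/
lemma coyoneda_app_eq (φ : preadditiveCoyoneda.obj (op X) ⟶ G) {c : C} (u : X ⟶ c) :
    φ.app c u = G.map u (φ.app X (𝟙 X)) := by
  have h := congrArg (fun (t : (preadditiveCoyoneda.obj (op X)).obj X ⟶ G.obj c) => t (𝟙 X))
    (φ.naturality u)
  have h2 : φ.app c (𝟙 X ≫ u) = G.map u (φ.app X (𝟙 X)) := h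
  rwa [Category.id_comp] at h2

/-- The additive co-Yoneda equivalence. -/
noncomputable def coyonedaAddEquiv : (preadditiveCoyoneda.obj (op X) ⟶ G) ≃+ G.obj X where
  toFun φ := φ.app X (𝟙 X)
  invFun x :=
    { app := fun c => AddCommGrpCat.ofHom
        { toFun := fun u => G.map u x
          map_zero' := by
            have : G.map (0 : X ⟶ c) = 0 := G.map_zero X c
            show G.map (0 : X ⟶ c) x = 0
            rw [this]; rfl
          map_add' := fun u v => by
            have : G.map (u + v) = G.map u + G.map v := G.map_add
            simp [this] }
      naturality := fun c d g => by
        ext u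
        show G.map (u ≫ g) x = G.map g (G.map u x)
        have : G.map (u ≫ g) = G.map u ≫ G.map g := G.map_comp u g
        simp [this] }
  left_inv φ := by
    ext c u
    exact (coyoneda_app_eq X G φ u).symm
  right_inv x := by show G.map (𝟙 X) x = x; simp
  map_add' φ ψ := by
    show ((φ + ψ).app X) (𝟙 X) = (φ.app X) (𝟙 X) + (ψ.app X) (𝟙 X)
    rw [NatTrans.app_add]; rfl

end Aux


/-- For a coherent functor `F` with defect `w(F) = ker f` and a left exact
additive functor `G : C ⥤ Ab`, there is an isomorphism of abelian groups
`G(w(F)) ≅ Nat(F, G)`. -/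
theorem leftExact_eval_defect_iso_nat
    (F : C ⥤ AddCommGrpCat.{v}) (X Y : C) (f : X ⟶ Y)
    (α : preadditiveCoyoneda.obj (op X) ⟶ F)
    (hw : preadditiveCoyoneda.map f.op ≫ α = 0) (hα : Epi α)
    (hex : (ShortComplex.mk (preadditiveCoyoneda.map f.op) α hw).Exact)
    (G : C ⥤ AddCommGrpCat.{v}) [G.Additive] [PreservesFiniteLimits G] :
    Nonempty ((G.obj (kernel f)) ≃+ (F ⟶ G)) := by
  set m := preadditiveCoyoneda.map f.op with hm
  -- step 1 : G(ker f) ≃+ ker (G.map f)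
  let e1 : G.obj (kernel f) ≃+ ↥(G.map f).hom.ker :=
    ((PreservesKernel.iso G f).trans (AddCommGrpCat.kernelIsoKer (G.map f))).addCommGroupIsoToAddEquiv
  -- the precomposition homomorphism
  let precomp : (preadditiveCoyoneda.obj (op X) ⟶ G) →+ (preadditiveCoyoneda.obj (op Y) ⟶ G) :=
    AddMonoidHom.mk' (fun φ => m ≫ φ) (fun φ ψ => Preadditive.comp_add _ _ _ _ _ _)
  let Yon := coyonedaAddEquiv X G
  -- key compatibility
  have key : ∀ φ : preadditiveCoyoneda.obj (op X) ⟶ G,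
      precomp φ = 0 ↔ G.map f (Yon φ) = 0 := by
    intro φ
    constructor
    · intro h
      have h2 := congrArg (fun (t : (preadditiveCoyoneda.obj (op Y) ⟶ G)) => t.app Y (𝟙 Y)) h
      have h3 : φ.app Y (f ≫ 𝟙 Y) = 0 := h2
      rw [Category.comp_id] at h3
      rw [coyoneda_app_eq X G φ f] at h3
      exact h3
    · intro h
      ext c v
      show (m ≫ φ).app c v = 0
      have h1 : (m ≫ φ).app c v = φ.app c (f ≫ v) := rfl
      rw [h1, coyoneda_app_eq X G φ (f ≫ v)]
      have hh : G.map (f ≫ v) = G.map f ≫ G.map v := G.map_comp f v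
      have h2 : G.map f (φ.app X (𝟙 X)) = 0 := h
      rw [hh]
      show G.map v (G.map f (φ.app X (𝟙 X))) = 0
      rw [h2]
      simp
  -- step 2 : ker (G.map f) ≃+ ker precomp
  let e2 : ↥(G.map f).hom.ker ≃+ ↥precomp.ker :=
    { toFun := fun x => ⟨Yon.symm x.1, by
        rw [AddMonoidHom.mem_ker, key, Yon.apply_symm_apply]
        exact x.2⟩
      invFun := fun φ => ⟨Yon φ.1, (key φ.1).mp φ.2⟩
      left_inv := fun x => by simp
      right_inv := fun φ => by simp
      map_add' := fun x y => by
        ext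
        simp }
  -- step 3 : ker precomp ≃+ (F ⟶ G)
  haveI : Epi (ShortComplex.mk m α hw).g := hα
  let hc := hex.gIsCokernel
  let Φ : (F ⟶ G) →+ ↥precomp.ker :=
    AddMonoidHom.mk' (fun η => ⟨α ≫ η, by
      show m ≫ α ≫ η = 0
      rw [← Category.assoc, hw, Limits.zero_comp]⟩)
      (fun η η' => by ext : 1; exact Preadditive.comp_add _ _ _ _ _ _)
  have hΦ : Function.Bijective Φ := by
    constructor
    · intro η η' h
      have : α ≫ η = α ≫ η' := congrArg Subtype.val h
      exact (cancel_epi α).mp this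
    · rintro ⟨φ, hφ⟩
      obtain ⟨η, hη⟩ := CokernelCofork.IsColimit.desc' hc φ hφ
      exact ⟨η, Subtype.ext hη⟩
  let e3 : ↥precomp.ker ≃+ (F ⟶ G) := (AddEquiv.ofBijective Φ hΦ).symm
  exact ⟨e1.trans (e2.trans e3)⟩
end

section
/- (CoYoneda lemma for coherent functors) For any coherent functor F on an abelian category C and any object X of C, Nat(F, Hom(X,-)) ≅ Hom_C(X, w(F)), naturally in F and X. -/
open CategoryTheory CategoryTheory.Limits Opposite

universe v u

variable (C : Type u) [Category.{v} C] [Abelian C]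

/-- CoYoneda lemma for coherent functors: For a coherent functor `F` with
defect `w(F) = ker f` and any object `Z : C`, there is an isomorphism of abelian groups
`Nat(F, Hom(Z,-)) ≅ Hom_C(Z, w(F))`. -/
theorem coYoneda_for_coherent
    (F : C ⥤ AddCommGrpCat.{v}) (X Y : C) (f : X ⟶ Y)
    (α : preadditiveCoyoneda.obj (op X) ⟶ F)
    (hw : preadditiveCoyoneda.map f.op ≫ α = 0) (hα : Epi α)
    (hex : (ShortComplex.mk (preadditiveCoyoneda.map f.op) α hw).Exact)
    (Z : C) :
    Nonempty ((F ⟶ preadditiveCoyoneda.obj (op Z)) ≃+ (Z ⟶ kernel f)) := by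
  have hEpi : Epi (ShortComplex.mk (preadditiveCoyoneda.map f.op) α hw).g := hα
  -- coyoneda lemma: a natural transformation between corepresentables is determined
  -- by its value on the identity
  have key : ∀ (β : preadditiveCoyoneda.obj (op X) ⟶ preadditiveCoyoneda.obj (op Z))
      (W : C) (h : X ⟶ W), β.app W h = β.app X (𝟙 X) ≫ h := fun β W h =>
    (congrArg (β.app W) (Category.id_comp h)).symm.trans
      (congrArg (fun γ => γ (𝟙 X)) (β.naturality h))
  have coyon : ∀ (β : preadditiveCoyoneda.obj (op X) ⟶ preadditiveCoyoneda.obj (op Z)),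
      β = preadditiveCoyoneda.map (β.app X (𝟙 X)).op := by
    intro β
    ext W h
    exact (key β W h).trans (Category.comp_id _).symm ▸ (key β W h)
  have hcomp0 : ∀ (η : F ⟶ preadditiveCoyoneda.obj (op Z)),
      ((α ≫ η).app X (𝟙 X)) ≫ f = 0 := by
    intro η
    have h0 : preadditiveCoyoneda.map f.op ≫ (α ≫ η) = 0 := by
      rw [← Category.assoc, hw, zero_comp]
    have h1 := congrArg (fun γ => γ.app Y (𝟙 Y)) h0
    simp only [NatTrans.comp_app, CategoryTheory.comp_apply] at h1
    have h2 : (α ≫ η).app Y ((preadditiveCoyoneda.map f.op).app Y (𝟙 Y))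
        = (α ≫ η).app Y f := by
      congr 1
      exact Category.comp_id f
    rw [← key (α ≫ η) Y f, ← h2]
    exact h1
  have hzero : ∀ (g : Z ⟶ kernel f),
      preadditiveCoyoneda.map f.op ≫ preadditiveCoyoneda.map ((g ≫ kernel.ι f)).op = 0 := by
    intro g
    rw [← Functor.map_comp]
    have : ((g ≫ kernel.ι f) ≫ f) = 0 := by simp
    have h3 : (f.op ≫ (g ≫ kernel.ι f).op) = ((g ≫ kernel.ι f) ≫ f).op := rfl
    rw [h3, this]
    ext W h
    simp
  let fwd : (F ⟶ preadditiveCoyoneda.obj (op Z)) → (Z ⟶ kernel f) := fun η =>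
    kernel.lift f ((α ≫ η).app X (𝟙 X)) (hcomp0 η)
  let bwd : (Z ⟶ kernel f) → (F ⟶ preadditiveCoyoneda.obj (op Z)) := fun g =>
    hex.desc (preadditiveCoyoneda.map ((g ≫ kernel.ι f)).op) (hzero g)
  have hdesc : ∀ g, α ≫ bwd g = preadditiveCoyoneda.map ((g ≫ kernel.ι f)).op := fun g =>
    hex.g_desc _ _
  refine ⟨AddEquiv.mk' (Equiv.mk fwd bwd ?_ ?_) ?_⟩
  · intro η
    rw [← cancel_epi α, hdesc]
    have h4 : fwd η ≫ kernel.ι f = (α ≫ η).app X (𝟙 X) := kernel.lift_ι _ _ _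
    rw [h4]
    exact (coyon (α ≫ η)).symm
  · intro g
    rw [← cancel_mono (kernel.ι f)]
    show fwd (bwd g) ≫ kernel.ι f = _
    rw [show fwd (bwd g) ≫ kernel.ι f = (α ≫ bwd g).app X (𝟙 X) from kernel.lift_ι _ _ _]
    rw [hdesc g]
    exact Category.comp_id _
  · intro η₁ η₂
    rw [← cancel_mono (kernel.ι f)]
    show fwd (η₁ + η₂) ≫ kernel.ι f = (fwd η₁ + fwd η₂) ≫ kernel.ι f
    rw [Preadditive.add_comp]
    simp only [fwd, kernel.lift_ι]
    simp [Preadditive.comp_add, AddMonoidHom.add_apply]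
    exact (kernel.lift_ι f _ _).trans (congrArg₂ (· + ·) (kernel.lift_ι f _ _) (kernel.lift_ι f _ _)).symm
end

section
/- Every coherent functor F fits into a four-term exact sequence 0 → F₀ → F → Hom(w(F), -) → F₁ → 0, natural in F, where w(F₀) = 0 and w(F₁) = 0; the middle map φ is the unit of the adjunction between r⁰ = Hom(w(-), -) and the inclusion of left exact coherent functors. -/
open CategoryTheory CategoryTheory.Limits Opposite

universe v u

variable (C : Type u) [Category.{v} C] [Abelian C]

/-- A functor has zero defect if it has a presentation induced by `f` with `ker f = 0`. -/
def HasZeroDefect (G : C ⥤ AddCommGrpCat.{v}) : Prop :=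
  ∃ (X Y : C) (f : X ⟶ Y) (α : preadditiveCoyoneda.obj (op X) ⟶ G)
    (w : preadditiveCoyoneda.map f.op ≫ α = 0),
    Epi α ∧ (ShortComplex.mk (preadditiveCoyoneda.map f.op) α w).Exact ∧
    IsZero (kernel f)

section Aux

variable {C}

/-- a short complex of functors is exact if it is exact pointwise -/
lemma exact_of_eval (S : ShortComplex (C ⥤ AddCommGrpCat.{v}))
    (h : ∀ A : C, (S.map ((evaluation C AddCommGrpCat.{v}).obj A)).Exact) : S.Exact := by
  rw [S.exact_iff_isZero_homology]
  refine Functor.isZero _ fun A => ?_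
  have hA := h A
  rw [(S.map ((evaluation C AddCommGrpCat.{v}).obj A)).exact_iff_isZero_homology] at hA
  exact hA.of_iso (S.mapHomologyIso ((evaluation C AddCommGrpCat.{v}).obj A)).symm

lemma coyoneda_map_zero {P Q : C} :
    preadditiveCoyoneda.map (0 : P ⟶ Q).op = 0 := by
  ext A u
  simp only [Limits.zero_app]
  exact zero_comp

lemma coyoneda_map_app {P Q A : C} (g : P ⟶ Q) (u : Q ⟶ A) :
    (preadditiveCoyoneda.map g.op).app A u = g ≫ u := rfl

end Aux

/-- Every coherent functor `F` (with defect `w(F) = ker f` for a presentation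
induced by `f : X ⟶ Y` via `α`) fits into a four-term exact sequence
`0 → F₀ → F → Hom(w(F),-) → F₁ → 0` where `w(F₀) = 0` and `w(F₁) = 0`, and the middle map `φ`
is the canonical one determined by `α ≫ φ = Hom(k,-)` for the kernel inclusion
`k : w(F) → X` (it is the unit of the adjunction `r⁰ ⊣ s`). -/
theorem four_term_exact_sequence
    (F : C ⥤ AddCommGrpCat.{v}) (X Y : C) (f : X ⟶ Y)
    (α : preadditiveCoyoneda.obj (op X) ⟶ F)
    (hw : preadditiveCoyoneda.map f.op ≫ α = 0) (hα : Epi α)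
    (hex : (ShortComplex.mk (preadditiveCoyoneda.map f.op) α hw).Exact) :
    ∃ (F₀ F₁ : C ⥤ AddCommGrpCat.{v}) (ι : F₀ ⟶ F)
      (φ : F ⟶ preadditiveCoyoneda.obj (op (kernel f)))
      (π : preadditiveCoyoneda.obj (op (kernel f)) ⟶ F₁)
      (h₁ : ι ≫ φ = 0) (h₂ : φ ≫ π = 0),
      Mono ι ∧ Epi π ∧
      (ShortComplex.mk ι φ h₁).Exact ∧
      (ShortComplex.mk φ π h₂).Exact ∧
      HasZeroDefect C F₀ ∧ HasZeroDefect C F₁ ∧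
      α ≫ φ = preadditiveCoyoneda.map (kernel.ι f).op := by
  haveI := hα
  -- the presentation exhibits `F` as a cokernel of `Hom(f,-)`
  have hc : IsColimit (CokernelCofork.ofπ α hw) := hex.gIsCokernel
  -- definition of `φ`
  have hk0 : preadditiveCoyoneda.map f.op ≫ preadditiveCoyoneda.map (kernel.ι f).op = 0 := by
    rw [← Functor.map_comp, ← op_comp, kernel.condition, coyoneda_map_zero]
  let φ : F ⟶ preadditiveCoyoneda.obj (op (kernel f)) :=
    hc.desc (CokernelCofork.ofπ (preadditiveCoyoneda.map (kernel.ι f).op) hk0)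
  have hφ : α ≫ φ = preadditiveCoyoneda.map (kernel.ι f).op :=
    Cofork.IsColimit.π_desc hc
  refine ⟨kernel φ, cokernel φ, kernel.ι φ, φ, cokernel.π φ, kernel.condition φ,
    cokernel.condition φ, inferInstance, inferInstance,
    ShortComplex.exact_of_f_is_kernel _ (kernelIsKernel φ),
    ShortComplex.exact_of_g_is_cokernel _ (cokernelIsCokernel φ),
    ?_, ?_, hφ⟩
  · -- `HasZeroDefect (kernel φ)`
    have hki : kernel.ι f ≫ Abelian.factorThruImage f = 0 := by
      rw [← cancel_mono (Abelian.image.ι f), Category.assoc, Abelian.image.fac,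
        kernel.condition, zero_comp]
    have hβ0 : (preadditiveCoyoneda.map (Abelian.factorThruImage f).op ≫ α) ≫ φ = 0 := by
      rw [Category.assoc, hφ, ← Functor.map_comp, ← op_comp, hki, coyoneda_map_zero]
    let β := kernel.lift φ (preadditiveCoyoneda.map (Abelian.factorThruImage f).op ≫ α) hβ0
    have hβι : β ≫ kernel.ι φ =
        preadditiveCoyoneda.map (Abelian.factorThruImage f).op ≫ α :=
      kernel.lift_ι _ _ _
    have hw' : preadditiveCoyoneda.map (Abelian.image.ι f).op ≫ β = 0 := by
      rw [← cancel_mono (kernel.ι φ), Category.assoc, hβι, zero_comp, ← Category.assoc,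
        ← Functor.map_comp, ← op_comp, Abelian.image.fac, hw]
    -- `factorThruImage f` is a cokernel of `kernel.ι f`
    have hlim : IsLimit (KernelFork.ofι (kernel.ι f) hki) :=
      KernelFork.IsLimit.ofι _ _
        (fun {T} t ht => kernel.lift f t
          (by rw [← Abelian.image.fac f, ← Category.assoc, ht, zero_comp]))
        (fun {T} t ht => kernel.lift_ι _ _ _)
        (fun {T} t ht m hm => by rw [← cancel_mono (kernel.ι f), hm, kernel.lift_ι])
    have hcoker : IsColimit (CokernelCofork.ofπ (Abelian.factorThruImage f) hki) :=
      Abelian.epiIsCokernelOfKernel _ hlim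
    -- pointwise facts
    have hαs : ∀ A : C, Function.Surjective (α.app A) := fun A =>
      (AddCommGrpCat.epi_iff_surjective _).1 (((NatTrans.epi_iff_epi_app α).1 hα) A)
    have hιi : ∀ A : C, Function.Injective ((kernel.ι φ).app A) := fun A =>
      (AddCommGrpCat.mono_iff_injective _).1 (((NatTrans.mono_iff_mono_app _).1 inferInstance) A)
    have hφα : ∀ (A : C) (u : X ⟶ A), φ.app A (α.app A u) = kernel.ι f ≫ u := by
      intro A u
      exact ConcreteCategory.congr_hom (NatTrans.congr_app hφ A) u
    have hβapp : ∀ (A : C) (u' : Abelian.image f ⟶ A),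
        (kernel.ι φ).app A (β.app A u') = α.app A (Abelian.factorThruImage f ≫ u') := by
      intro A u'
      exact ConcreteCategory.congr_hom (NatTrans.congr_app hβι A) u'
    have hβep : Epi β := by
      rw [NatTrans.epi_iff_epi_app]
      intro A
      rw [AddCommGrpCat.epi_iff_surjective]
      intro x
      obtain ⟨u, hu⟩ := hαs A ((kernel.ι φ).app A x)
      have hku : kernel.ι f ≫ u = 0 := by
        rw [← hφα A u, hu]
        have h3 := ConcreteCategory.congr_hom (NatTrans.congr_app (kernel.condition φ) A) x
        simp only [NatTrans.comp_app, Limits.zero_app, CategoryTheory.comp_apply] at h3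
        exact h3
      obtain ⟨u', hu'⟩ := CokernelCofork.IsColimit.desc' hcoker u hku
      refine ⟨u', hιi A ?_⟩
      rw [hβapp A u']
      simp only [Cofork.π_ofπ] at hu'
      rw [hu', hu]
    have hexact : (ShortComplex.mk (preadditiveCoyoneda.map (Abelian.image.ι f).op) β
        hw').Exact := by
      apply exact_of_eval
      intro A
      rw [ShortComplex.ab_exact_iff]
      intro u' hu'0
      have hu0 : β.app A u' = 0 := hu'0
      have h2 : α.app A (Abelian.factorThruImage f ≫ u') = 0 := by
        rw [← hβapp A u', hu0, map_zero]
      have hexA := hex.map ((evaluation C AddCommGrpCat.{v}).obj A)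
      rw [ShortComplex.ab_exact_iff] at hexA
      obtain ⟨v, hv⟩ : ∃ v : Y ⟶ A, f ≫ v = Abelian.factorThruImage f ≫ u' :=
        hexA (Abelian.factorThruImage f ≫ u') h2
      refine ⟨v, ?_⟩
      show Abelian.image.ι f ≫ v = u'
      refine (cancel_epi (Abelian.factorThruImage f)).1 ?_
      rw [← Category.assoc, Abelian.image.fac]
      exact hv
    exact ⟨Abelian.image f, Y, Abelian.image.ι f, β, hw', hβep, hexact,
      (isZero_zero C).of_iso (kernel.ofMono _)⟩
  · -- `HasZeroDefect (cokernel φ)`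
    have hw'' : preadditiveCoyoneda.map (kernel.ι f).op ≫ cokernel.π φ = 0 := by
      rw [← hφ, Category.assoc, cokernel.condition, comp_zero]
    exact ⟨kernel f, X, kernel.ι f, cokernel.π φ, hw'', inferInstance,
      ShortComplex.exact_of_g_is_cokernel _
        (isCokernelEpiComp (cokernelIsCokernel φ) α hφ.symm),
      (isZero_zero C).of_iso (kernel.ofMono _)⟩
end

section
/- If an abelian category C has enough projectives, then every coherent functor F : C → Ab admits an injective resolution of length at most 2 in fp(C, Ab): there is an exact sequence 0 → F → I⁰ → I¹ → I² → 0 with each Iʲ injective in fp(C, Ab). In particular fp(C, Ab) has enough injectives and every coherent functor has injective dimension at most 2. -/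
open CategoryTheory CategoryTheory.Limits Opposite ZeroObject

universe v u

variable (C : Type u) [Category.{v} C] [Abelian C]

namespace CohProof

variable {C}

/-- covariant hom functor -/
abbrev hF (X : C) : C ⥤ AddCommGrpCat.{v} := preadditiveCoyoneda.obj (op X)

/-- induced map on hom functors -/
abbrev hm {X Y : C} (f : X ⟶ Y) : hF Y ⟶ hF X := preadditiveCoyoneda.map f.op

@[simp] lemma hm_app {X Y A : C} (f : X ⟶ Y) (φ : (hF Y).obj A) :
    ((hm f).app A φ : X ⟶ A) = f ≫ (φ : Y ⟶ A) := rfl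

@[simp] lemma hF_map {X A B : C} (k : A ⟶ B) (φ : (hF X).obj A) :
    ((hF X).map k φ : X ⟶ B) = (φ : X ⟶ A) ≫ k := rfl

lemma hm_comp {X Y Z : C} (f : X ⟶ Y) (g : Y ⟶ Z) :
    hm (f ≫ g) = hm g ≫ hm f := by
  show preadditiveCoyoneda.map (f ≫ g).op = _
  rw [op_comp, Functor.map_comp]

/-- the subgroup of maps `X ⟶ A` factoring through `g : X ⟶ Y` -/
def rng {X Y : C} (g : X ⟶ Y) (A : C) : AddSubgroup (X ⟶ A) :=
  AddMonoidHom.range (AddMonoidHom.mk' (fun θ : Y ⟶ A => g ≫ θ) (fun _ _ => by simp))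

lemma mem_rng {X Y A : C} {g : X ⟶ Y} {θ : X ⟶ A} :
    θ ∈ rng g A ↔ ∃ σ : Y ⟶ A, g ≫ σ = θ := Iff.rfl

/-- the cokernel of `hm g`, as an explicit quotient functor -/
def Hq {X Y : C} (g : X ⟶ Y) : C ⥤ AddCommGrpCat.{v} where
  obj A := AddCommGrpCat.of ((X ⟶ A) ⧸ rng g A)
  map {A B} k := AddCommGrpCat.ofHom <| QuotientAddGroup.map _ _
      (AddMonoidHom.mk' (fun θ : X ⟶ A => θ ≫ k) (fun _ _ => by simp))
      (by rintro θ ⟨σ, rfl⟩; exact ⟨σ ≫ k, by simp⟩)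
  map_id A := by
    refine AddCommGrpCat.ext (fun x => QuotientAddGroup.induction_on x (fun θ => ?_))
    show QuotientAddGroup.mk (θ ≫ 𝟙 A) = QuotientAddGroup.mk θ
    simp
  map_comp {A B D} k l := by
    refine AddCommGrpCat.ext (fun x => QuotientAddGroup.induction_on x (fun θ => ?_))
    show QuotientAddGroup.mk (θ ≫ (k ≫ l)) = QuotientAddGroup.mk ((θ ≫ k) ≫ l)
    simp

@[simp] lemma Hq_map_mk {X Y A B : C} (g : X ⟶ Y) (k : A ⟶ B) (θ : X ⟶ A) :
    (Hq g).map k (QuotientAddGroup.mk θ) = QuotientAddGroup.mk (θ ≫ k) := rfl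

lemma Hq_mk_eq_zero {X Y A : C} (g : X ⟶ Y) (θ : X ⟶ A) (σ : Y ⟶ A) (h : g ≫ σ = θ) :
    (QuotientAddGroup.mk θ : (Hq g).obj A) = 0 :=
  (QuotientAddGroup.eq_zero_iff _).mpr ⟨σ, h⟩

lemma Hq_mk_eq_of {X Y A : C} (g : X ⟶ Y) (θ θ' : X ⟶ A) (σ : Y ⟶ A) (h : θ - θ' = g ≫ σ) :
    (QuotientAddGroup.mk θ : (Hq g).obj A) = QuotientAddGroup.mk θ' := by
  rw [← sub_eq_zero, ← QuotientAddGroup.mk_sub]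
  exact Hq_mk_eq_zero g _ σ h.symm

/-- the projection `hF X ⟶ Hq g` -/
def pih {X Y : C} (g : X ⟶ Y) : hF X ⟶ Hq g where
  app A := AddCommGrpCat.ofHom (QuotientAddGroup.mk' (rng g A))
  naturality A B k := rfl

@[simp] lemma pih_app {X Y A : C} (g : X ⟶ Y) (φ : (hF X).obj A) :
    (pih g).app A φ = QuotientAddGroup.mk (φ : X ⟶ A) := rfl

lemma hm_pih {X Y : C} (g : X ⟶ Y) : hm g ≫ pih g = 0 := by
  apply NatTrans.ext; funext A
  refine AddCommGrpCat.ext (fun σ => ?_)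
  show (QuotientAddGroup.mk (g ≫ (σ : Y ⟶ A)) : (Hq g).obj A) = 0
  exact Hq_mk_eq_zero g _ σ rfl

/-- pointwise surjectivity of epis in the functor category -/
lemma pw_surj {F G : C ⥤ AddCommGrpCat.{v}} (η : F ⟶ G) [Epi η] (A : C) :
    Function.Surjective (η.app A) := by
  haveI : Epi (η.app A) := (NatTrans.epi_iff_epi_app η).mp inferInstance A
  exact (AddCommGrpCat.epi_iff_surjective _).mp this

/-- a short complex of functors which is pointwise exact is exact -/
lemma exact_of_pw (S : ShortComplex (C ⥤ AddCommGrpCat.{v}))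
    (h : ∀ (A : C) (x : S.X₂.obj A), S.g.app A x = 0 → ∃ y : S.X₁.obj A, S.f.app A y = x) :
    S.Exact := by
  haveI : ∀ A : C, PreservesFiniteLimits ((evaluation C AddCommGrpCat.{v}).obj A) :=
    fun A => ⟨fun J _ _ => inferInstance⟩
  haveI : ∀ A : C, PreservesFiniteColimits ((evaluation C AddCommGrpCat.{v}).obj A) :=
    fun A => ⟨fun J _ _ => inferInstance⟩
  rw [(S.leftHomologyData).exact_iff]
  refine Functor.isZero _ (fun A => ?_)
  have := ((S.leftHomologyData).exact_map_iff ((evaluation C AddCommGrpCat.{v}).obj A)).mp ?_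
  · exact this
  · rw [ShortComplex.ab_exact_iff]
    intro x hx
    exact h A x hx

lemma coherent_Hq {X Y : C} (g : X ⟶ Y) : IsCoherent C (Hq g) := by
  refine ⟨X, Y, g, pih g, hm_pih g, ?_, ?_⟩
  · have : ∀ A : C, Epi ((pih g).app A) := fun A =>
      (AddCommGrpCat.epi_iff_surjective _).mpr (fun x =>
        QuotientAddGroup.induction_on x (fun θ => ⟨θ, rfl⟩))
    exact NatTrans.epi_of_epi_app _
  · refine exact_of_pw _ (fun A (x : X ⟶ A) hx => ?_)
    obtain ⟨σ, hσ⟩ := (QuotientAddGroup.eq_zero_iff (x : X ⟶ A)).mp hx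
    exact ⟨σ, hσ⟩

lemma coherent_hF (A : C) : IsCoherent C (hF A) := by
  refine ⟨A, 0, 0, 𝟙 _, ?_, inferInstance, ?_⟩
  · apply NatTrans.ext; funext B
    refine AddCommGrpCat.ext (fun (σ : (0:C) ⟶ B) => ?_)
    show (0 : A ⟶ (0:C)) ≫ (σ : (0:C) ⟶ B) = 0
    simp
  · refine exact_of_pw _ (fun B x hx => ?_)
    refine ⟨0, ?_⟩
    have : x = 0 := hx
    simp [this]

lemma projective_biprod {P Q : C} (hP : Projective P) (hQ : Projective Q) :
    Projective (P ⊞ Q) := by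
  constructor
  intro E Xx f e he
  obtain ⟨h1, hh1⟩ := hP.factors (biprod.inl ≫ f) e
  obtain ⟨h2, hh2⟩ := hQ.factors (biprod.inr ≫ f) e
  refine ⟨biprod.desc h1 h2, ?_⟩
  apply biprod.hom_ext' <;> simp [hh1, hh2]

/-- Lemma A: half-exactness of `Hq f` for `f` a map between projectives. -/
lemma halfexact {P Q : C} (hP : Projective P) (hQ : Projective Q) (f : P ⟶ Q)
    {X Y : C} (g : X ⟶ Y) (ρ : P ⟶ Y) (σ : Q ⟶ cokernel g)
    (hσ : f ≫ σ = ρ ≫ cokernel.π g) :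
    ∃ (τ : P ⟶ X) (σ' : Q ⟶ Y), ρ = τ ≫ g + f ≫ σ' := by
  haveI := hP; haveI := hQ
  let σt : Q ⟶ Y := Projective.factorThru σ (cokernel.π g)
  have hσt : σt ≫ cokernel.π g = σ := Projective.factorThru_comp _ _
  have hπ : (ρ - f ≫ σt) ≫ cokernel.π g = 0 := by
    rw [Preadditive.sub_comp, Category.assoc, hσt, hσ, sub_self]
  let k : P ⟶ kernel (cokernel.π g) := kernel.lift _ _ hπ
  have hk : k ≫ kernel.ι (cokernel.π g) = ρ - f ≫ σt := kernel.lift_ι _ _ _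
  let τ : P ⟶ X := Projective.factorThru k (Abelian.factorThruImage g)
  have hτ : τ ≫ Abelian.factorThruImage g = k := Projective.factorThru_comp _ _
  refine ⟨τ, σt, ?_⟩
  have : τ ≫ g = ρ - f ≫ σt := by
    have := Abelian.image.fac g
    calc τ ≫ g = τ ≫ Abelian.factorThruImage g ≫ Abelian.image.ι g := by rw [this]
    _ = k ≫ kernel.ι (cokernel.π g) := by rw [← Category.assoc, hτ]
    _ = ρ - f ≫ σt := hk
  rw [this]; abel

/-- The STEP construction -/
lemma step [EnoughProjectives C] {X Y : C} (g : X ⟶ Y) :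
    ∃ (P Q : C) (_ : Projective P) (_ : Projective Q) (e : P ⟶ Y) (u : Q ⟶ X) (g₀ : Q ⟶ P),
      Epi u ∧ u ≫ g = g₀ ≫ e ∧
      ∀ ⦃A : C⦄ (φ : X ⟶ A) (ψ : P ⟶ A), u ≫ φ = g₀ ≫ ψ → ∃ χ : Y ⟶ A, g ≫ χ = φ := by
  let P := Projective.over Y
  let e : P ⟶ Y := Projective.π Y
  let K := pullback g e
  let Q := Projective.over K
  let s : Q ⟶ K := Projective.π K
  let u : Q ⟶ X := s ≫ pullback.fst g e
  let g₀ : Q ⟶ P := s ≫ pullback.snd g e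
  haveI : Epi (pullback.fst g e) := inferInstance
  refine ⟨P, Q, inferInstance, inferInstance, e, u, g₀, epi_comp _ _, ?_, ?_⟩
  · show (s ≫ pullback.fst g e) ≫ g = (s ≫ pullback.snd g e) ≫ e
    rw [Category.assoc, Category.assoc, pullback.condition]
  · intro A φ ψ h
    have h' : pullback.fst g e ≫ φ = pullback.snd g e ≫ ψ := by
      rw [← cancel_epi s, ← Category.assoc, ← Category.assoc]
      exact h
    have hepi : Epi (biprod.desc g (-e)) := by
      have h1 : Epi (-e) := by
        have : -e = e ≫ (-𝟙 Y) := by simp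
        rw [this]; exact epi_comp _ _
      have h2 : biprod.inr ≫ biprod.desc g (-e) = -e := biprod.inr_desc _ _
      have : Epi (biprod.inr ≫ biprod.desc g (-e)) := by rwa [h2]
      exact epi_of_epi biprod.inr _
    have hlim := Abelian.PullbackToBiproductIsKernel.isLimitPullbackToBiproduct g e
    have hcolim := Abelian.epiIsCokernelOfKernel _ hlim
    have hd : Abelian.PullbackToBiproductIsKernel.pullbackToBiproduct g e ≫
        biprod.desc φ (-ψ) = 0 := by
      rw [biprod.lift_desc]
      simp [h']
    obtain ⟨χ, hχ⟩ := CokernelCofork.IsColimit.desc' hcolim (biprod.desc φ (-ψ)) hd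
    refine ⟨χ, ?_⟩
    have := biprod.inl ≫= hχ
    simpa using this

lemma nat_app {F G : C ⥤ AddCommGrpCat.{v}} (η : F ⟶ G) {A B : C} (k : A ⟶ B) (x : F.obj A) :
    η.app B (F.map k x) = G.map k (η.app A x) :=
  congrArg (fun m : F.obj A ⟶ G.obj B => m x) (η.naturality k)

/-- maps between the quotient functors -/
def HqMap {Q₁ Z₁ Q₂ Z₂ : C} (v : Q₁ ⟶ Z₁) (w : Q₂ ⟶ Z₂) (u : Q₂ ⟶ Q₁)
    (h : ∀ (A : C) (θ : Q₁ ⟶ A), θ ∈ rng v A → u ≫ θ ∈ rng w A) : Hq v ⟶ Hq w where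
  app A := AddCommGrpCat.ofHom <| QuotientAddGroup.map _ _
      (AddMonoidHom.mk' (fun θ : Q₁ ⟶ A => u ≫ θ) (fun _ _ => by simp)) (fun θ hθ => h A θ hθ)
  naturality A B k := by
    refine AddCommGrpCat.ext (fun x => QuotientAddGroup.induction_on x (fun θ => ?_))
    show (QuotientAddGroup.mk (u ≫ θ ≫ k) : (Hq w).obj B) = QuotientAddGroup.mk ((u ≫ θ) ≫ k)
    rw [Category.assoc]

@[simp] lemma HqMap_mk {Q₁ Z₁ Q₂ Z₂ A : C} (v : Q₁ ⟶ Z₁) (w : Q₂ ⟶ Z₂) (u : Q₂ ⟶ Q₁)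
    (h : ∀ (A : C) (θ : Q₁ ⟶ A), θ ∈ rng v A → u ≫ θ ∈ rng w A) (θ : Q₁ ⟶ A) :
    (HqMap v w u h).app A (QuotientAddGroup.mk θ) = QuotientAddGroup.mk (u ≫ θ) := rfl

/-- a mono in `Fp C` is pointwise injective -/
lemma mono_pw {F₁ F₂ : Fp C} (ι : F₁ ⟶ F₂) [Mono ι] {A : C} (x : F₁.obj.obj A)
    (hx : ι.hom.app A x = 0) : x = 0 := by
  obtain ⟨X₁, Y₁, g₁, α₁, w₁, hα₁, hex₁⟩ := F₁.property
  haveI := hα₁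
  obtain ⟨φ₀, hφ₀⟩ : ∃ φ₀ : X₁ ⟶ A, α₁.app A φ₀ = x := pw_surj α₁ A x
  let ε : hF A ⟶ F₁.obj := hm (φ₀ : X₁ ⟶ A) ≫ α₁
  have hcomp : ε ≫ ι.hom = 0 := by
    apply NatTrans.ext; funext B
    refine AddCommGrpCat.ext (fun θ => ?_)
    show ι.hom.app B (α₁.app B ((hF X₁).map (θ : A ⟶ B) φ₀)) = 0
    rw [nat_app α₁ (θ : A ⟶ B) φ₀, hφ₀, nat_app ι.hom (θ : A ⟶ B) x, hx,
      map_zero]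
  let εF : (⟨hF A, coherent_hF A⟩ : Fp C) ⟶ F₁ := ObjectProperty.homMk ε
  let ζF : (⟨hF A, coherent_hF A⟩ : Fp C) ⟶ F₁ := ObjectProperty.homMk (0 : hF A ⟶ F₁.obj)
  have heq : εF ≫ ι = ζF ≫ ι := by
    ext1
    show ε ≫ ι.hom = (0 : hF A ⟶ F₁.obj) ≫ ι.hom
    rw [hcomp, Limits.zero_comp]
  have hε0 : ε = (0 : hF A ⟶ F₁.obj) := congrArg InducedCategory.Hom.hom ((cancel_mono ι).mp heq)
  have hx1 : ε.app A (𝟙 A) = x := by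
    show α₁.app A ((hm (φ₀ : X₁ ⟶ A)).app A (𝟙 A)) = x
    have h1 : (hm (φ₀ : X₁ ⟶ A)).app A (𝟙 A) = φ₀ := by
      show (φ₀ : X₁ ⟶ A) ≫ 𝟙 A = (φ₀ : X₁ ⟶ A)
      simp
    rw [h1, hφ₀]
  rw [← hx1, hε0]
  rfl

/-- Lemma B : quotients of coyonedas of maps between projectives are injective in `Fp C`. -/
lemma injective_Hq {P Q : C} (hP : Projective P) (hQ : Projective Q) (f : P ⟶ Q) :
    Injective (⟨Hq f, coherent_Hq f⟩ : Fp C) := by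
  constructor
  intro F₁ F₂ φ ι hι
  haveI := hι
  obtain ⟨X₁, Y₁, g₁, α₁, w₁, hα₁, hex₁⟩ := F₁.property
  obtain ⟨X₂, Y₂, g₂, α₂, w₂, hα₂, hex₂⟩ := F₂.property
  haveI := hα₁; haveI := hα₂
  let φ' : F₁.obj ⟶ Hq f := φ.hom
  let ι' : F₁.obj ⟶ F₂.obj := ι.hom
  let y₀ : F₁.obj.obj X₁ := α₁.app X₁ (𝟙 X₁)
  obtain ⟨ρ, hρ⟩ := QuotientAddGroup.mk'_surjective (rng f X₁) (φ'.app X₁ y₀)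
  obtain ⟨θ₀, hθ₀⟩ : ∃ θ₀ : X₂ ⟶ X₁, α₂.app X₁ θ₀ = ι'.app X₁ y₀ := pw_surj α₂ X₁ (ι'.app X₁ y₀)
  let t : X₂ ⟶ X₁ ⊞ Y₂ := biprod.lift (θ₀ : X₂ ⟶ X₁) g₂
  let c₁ : X₁ ⟶ cokernel t := biprod.inl ≫ cokernel.π t
  let c₂ : Y₂ ⟶ cokernel t := biprod.inr ≫ cokernel.π t
  have h0 : (θ₀ : X₂ ⟶ X₁) ≫ c₁ + g₂ ≫ c₂ = 0 := by
    show (θ₀ : X₂ ⟶ X₁) ≫ biprod.inl ≫ cokernel.π t + g₂ ≫ biprod.inr ≫ cokernel.π t = 0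
    rw [← Category.assoc, ← Category.assoc, ← Preadditive.add_comp]
    have h2 : (θ₀ : X₂ ⟶ X₁) ≫ biprod.inl + g₂ ≫ biprod.inr = t := by
      apply biprod.hom_ext <;> simp [t]
    rw [h2, cokernel.condition]
  -- Claim A : the generator of F₁ dies under `F₁.map c₁`
  have hA : F₁.obj.map c₁ y₀ = 0 := by
    apply mono_pw ι
    show ι'.app _ (F₁.obj.map c₁ y₀) = 0
    rw [nat_app ι' c₁ y₀, ← hθ₀, ← nat_app α₂ c₁ θ₀]
    have e1 : (hF X₂).map c₁ θ₀ = (hm g₂).app (cokernel t) (-c₂) := by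
      show (θ₀ : X₂ ⟶ X₁) ≫ c₁ = g₂ ≫ (-c₂)
      rw [Preadditive.comp_neg]
      exact eq_neg_of_add_eq_zero_left h0
    rw [e1]
    have := congrArg (fun m : hF Y₂ ⟶ F₂.obj => m.app (cokernel t) (-c₂)) w₂
    exact this
  have hφnat : (Hq f).map c₁ ((QuotientAddGroup.mk' (rng f X₁)) ρ) = 0 := by
    rw [hρ, ← nat_app φ' c₁ y₀, hA, map_zero]
  obtain ⟨σW, hσW0⟩ := (QuotientAddGroup.eq_zero_iff (ρ ≫ c₁)).mp hφnat
  have hσW : f ≫ σW = ρ ≫ c₁ := hσW0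
  -- apply half-exactness
  have hcompat : f ≫ σW = (biprod.lift ρ (0 : P ⟶ Y₂)) ≫ cokernel.π t := by
    have h2 : biprod.lift ρ (0 : P ⟶ Y₂) = ρ ≫ biprod.inl := by
      apply biprod.hom_ext <;> simp
    rw [h2, Category.assoc]
    exact hσW
  obtain ⟨τ, σ', hτ⟩ := halfexact hP hQ f t (biprod.lift ρ 0) σW hcompat
  have hτ1 : ρ = τ ≫ (θ₀ : X₂ ⟶ X₁) + f ≫ (σ' ≫ biprod.fst) := by
    simpa [t, Preadditive.add_comp, Category.assoc] using
      congrArg (fun m : P ⟶ X₁ ⊞ Y₂ => m ≫ biprod.fst) hτ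
  have hτ2 : (0 : P ⟶ Y₂) = τ ≫ g₂ + f ≫ (σ' ≫ biprod.snd) := by
    simpa [t, Preadditive.add_comp, Category.assoc] using
      congrArg (fun m : P ⟶ X₁ ⊞ Y₂ => m ≫ biprod.snd) hτ
  -- the extension, first on the presentation of F₂
  let Ψ : hF X₂ ⟶ Hq f := hm τ ≫ pih f
  have hΨ0 : hm g₂ ≫ Ψ = 0 := by
    apply NatTrans.ext; funext B
    refine AddCommGrpCat.ext (fun (σ : Y₂ ⟶ B) => ?_)
    show (QuotientAddGroup.mk (τ ≫ g₂ ≫ (σ : Y₂ ⟶ B)) : (Hq f).obj B) = 0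
    refine Hq_mk_eq_zero f _ (-(σ' ≫ biprod.snd ≫ (σ : Y₂ ⟶ B))) ?_
    have h3 : τ ≫ g₂ = -(f ≫ σ' ≫ biprod.snd) := eq_neg_of_add_eq_zero_left hτ2.symm
    conv_rhs => rw [← Category.assoc, h3]
    simp [Category.assoc]
  have hS₂ : (ShortComplex.mk (hm g₂) α₂ w₂).Exact := hex₂
  haveI : Epi (ShortComplex.mk (hm g₂) α₂ w₂).g := hα₂
  obtain ⟨ψ₀, hψ₀⟩ := CokernelCofork.IsColimit.desc' hS₂.gIsCokernel Ψ hΨ0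
  refine ⟨ObjectProperty.homMk ψ₀, ?_⟩
  ext1
  show ι' ≫ ψ₀ = φ'
  rw [← cancel_epi α₁]
  apply NatTrans.ext; funext B
  refine AddCommGrpCat.ext (fun (θ : X₁ ⟶ B) => ?_)
  have e1 : α₁.app B θ = F₁.obj.map (θ : X₁ ⟶ B) y₀ := by
    have h4 := nat_app α₁ (θ : X₁ ⟶ B) (𝟙 X₁)
    have h5 : (hF X₁).map (θ : X₁ ⟶ B) (𝟙 X₁) = θ := by
      show 𝟙 X₁ ≫ (θ : X₁ ⟶ B) = (θ : X₁ ⟶ B)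
      simp
    rw [h5] at h4
    exact h4
  have hαψ : ∀ (D : C) (ξ : (hF X₂).obj D), ψ₀.app D (α₂.app D ξ) = Ψ.app D ξ :=
    fun D ξ => congrArg (fun m : hF X₂ ⟶ Hq f => m.app D ξ) hψ₀
  calc (α₁ ≫ ι' ≫ ψ₀).app B θ
      = ψ₀.app B (ι'.app B (α₁.app B θ)) := rfl
    _ = ψ₀.app B (F₂.obj.map (θ : X₁ ⟶ B) (α₂.app X₁ θ₀)) := by
        rw [e1, nat_app ι' (θ : X₁ ⟶ B) y₀, hθ₀]
    _ = ψ₀.app B (α₂.app B ((hF X₂).map (θ : X₁ ⟶ B) θ₀)) := by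
        rw [nat_app α₂ (θ : X₁ ⟶ B) θ₀]
    _ = (show (Hq f).obj B from QuotientAddGroup.mk (τ ≫ (θ₀ : X₂ ⟶ X₁) ≫ (θ : X₁ ⟶ B))) := by
        rw [hαψ]
        rfl
    _ = (show (Hq f).obj B from QuotientAddGroup.mk (ρ ≫ (θ : X₁ ⟶ B))) := by
        refine Hq_mk_eq_of f _ _ (-(σ' ≫ biprod.fst ≫ (θ : X₁ ⟶ B))) ?_
        rw [hτ1]
        simp [Preadditive.add_comp, Category.assoc]
    _ = (Hq f).map (θ : X₁ ⟶ B) ((QuotientAddGroup.mk' (rng f X₁)) ρ) := rfl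
    _ = (α₁ ≫ φ').app B θ := by
        rw [hρ]
        show (Hq f).map (θ : X₁ ⟶ B) (φ'.app X₁ y₀) = φ'.app B (α₁.app B θ)
        rw [← nat_app φ' (θ : X₁ ⟶ B) y₀, e1]

section FpTransfer

/-- the underlying natural transformation of a morphism in `Fp C` -/
def amb {X Y : Fp C} (f : X ⟶ Y) : X.obj ⟶ Y.obj := f.hom

lemma fp_mono {X Y : Fp C} (f : X ⟶ Y) (h : Mono (amb f)) : Mono f := by
  constructor
  intro Z g h' hgh
  haveI := h
  have hgh' : amb g ≫ amb f = amb h' ≫ amb f := congrArg InducedCategory.Hom.hom hgh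
  exact ObjectProperty.hom_ext _ ((cancel_mono (amb f)).mp hgh')

lemma fp_epi {X Y : Fp C} (f : X ⟶ Y) (h : Epi (amb f)) : Epi f := by
  constructor
  intro Z g h' hgh
  haveI := h
  have hgh' : amb f ≫ amb g = amb f ≫ amb h' := congrArg InducedCategory.Hom.hom hgh
  exact ObjectProperty.hom_ext _ ((cancel_epi (amb f)).mp hgh')

/-- reflect a kernel fork from the ambient functor category to `Fp C` -/
def fp_kernel_isLimit {K X₂ X₃ : Fp C} (i : K ⟶ X₂) (g : X₂ ⟶ X₃) (wi : i ≫ g = 0)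
    (wia : amb i ≫ amb g = 0)
    (h : IsLimit (KernelFork.ofι (amb i) wia))
    (hm : Mono (amb i)) :
    IsLimit (KernelFork.ofι i wi) := by
  haveI : Mono i := fp_mono i hm
  refine KernelFork.IsLimit.ofι' i wi (fun {A} k hk => ?_)
  refine ⟨ObjectProperty.homMk (h.lift (KernelFork.ofι (amb k) (show amb k ≫ amb g = 0 from congrArg InducedCategory.Hom.hom hk))), ?_⟩
  exact ObjectProperty.hom_ext _ (Fork.IsLimit.lift_ι h)

/-- reflect a cokernel cofork from the ambient functor category to `Fp C` -/
def fp_cokernel_isColimit {X₁ X₂ Q : Fp C} (f : X₁ ⟶ X₂) (p : X₂ ⟶ Q) (wp : f ≫ p = 0)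
    (wpa : amb f ≫ amb p = 0)
    (h : IsColimit (CokernelCofork.ofπ (amb p) wpa))
    (he : Epi (amb p)) :
    IsColimit (CokernelCofork.ofπ p wp) := by
  haveI : Epi p := fp_epi p he
  refine CokernelCofork.IsColimit.ofπ' p wp (fun {A} k hk => ?_)
  refine ⟨ObjectProperty.homMk (h.desc (CokernelCofork.ofπ (amb k) (show amb f ≫ amb k = 0 from congrArg InducedCategory.Hom.hom hk))), ?_⟩
  exact ObjectProperty.hom_ext _ (Cofork.IsColimit.π_desc h)

/-- the zero object of `Fp C` -/
noncomputable def FpZero : Fp C := ⟨hF (0 : C), coherent_hF 0⟩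

lemma isZero_FpZero : IsZero (FpZero : Fp C) := by
  have hz : IsZero (hF (0 : C)) := by
    refine Functor.isZero _ (fun A => ?_)
    haveI : Subsingleton ((hF (0 : C)).obj A) :=
      ⟨fun f g => (isZero_zero C).eq_of_src f g⟩
    exact AddCommGrpCat.isZero_of_subsingleton _
  rw [IsZero.iff_id_eq_zero]
  exact ObjectProperty.hom_ext _ (hz.eq_of_src (𝟙 (hF (0 : C))) 0)

/-- build exactness in `Fp C` from ambient kernel/cokernel data -/
lemma fp_exact (S : ShortComplex (Fp C)) (K Q : Fp C)
    (i : K ⟶ S.X₂) (p : S.X₂ ⟶ Q) (f' : S.X₁ ⟶ K) (g' : Q ⟶ S.X₃)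
    (hf' : f' ≫ i = S.f) (hg' : p ≫ g' = S.g)
    (wia : amb i ≫ amb S.g = 0)
    (hi : IsLimit (KernelFork.ofι (amb i) wia))
    (wpa : amb S.f ≫ amb p = 0)
    (hp : IsColimit (CokernelCofork.ofπ (amb p) wpa))
    (him : Mono (amb i)) (hpe : Epi (amb p))
    (hf'e : Epi (amb f')) (hg'm : Mono (amb g')) :
    S.Exact := by
  haveI : Mono i := fp_mono i him
  haveI : Epi p := fp_epi p hpe
  haveI : Epi f' := fp_epi f' hf'e
  haveI : Mono g' := fp_mono g' hg'm
  have wi : i ≫ S.g = 0 := ObjectProperty.hom_ext _ wia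
  have wp : S.f ≫ p = 0 := ObjectProperty.hom_ext _ wpa
  have hi' : IsLimit (KernelFork.ofι i wi) := fp_kernel_isLimit i S.g wi wia hi him
  have hp' : IsColimit (CokernelCofork.ofπ p wp) := fp_cokernel_isColimit S.f p wp wpa hp hpe
  have hf'' : hi'.lift (KernelFork.ofι S.f S.zero) = f' := by
    rw [← cancel_mono i, hf']
    exact Fork.IsLimit.lift_ι hi'
  haveI hef'' : Epi (hi'.lift (KernelFork.ofι S.f S.zero)) := by
    rw [hf'']; infer_instance
  have hg'' : hp'.desc (CokernelCofork.ofπ S.g S.zero) = g' := by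
    rw [← cancel_epi p, hg']
    exact Cofork.IsColimit.π_desc hp'
  haveI hmg'' : Mono (hp'.desc (CokernelCofork.ofπ S.g S.zero)) := by
    rw [hg'']; infer_instance
  have hip : i ≫ p = 0 := by
    rw [← cancel_epi f', ← Category.assoc, hf', wp, Limits.comp_zero]
  let L : S.LeftHomologyData :=
    { K := K
      H := FpZero
      i := i
      π := 0
      wi := wi
      hi := hi'
      wπ := Limits.comp_zero
      hπ := CokernelCofork.IsColimit.ofEpiOfIsZero _ hef'' isZero_FpZero }
  let R : S.RightHomologyData :=
    { Q := Q
      H := FpZero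
      p := p
      ι := 0
      wp := wp
      hp := hp'
      wι := Limits.zero_comp
      hι := KernelFork.IsLimit.ofMonoOfIsZero _ hmg'' isZero_FpZero }
  refine ⟨⟨{ left := L, right := R, iso := Iso.refl _, comm := ?_ }, ?_⟩⟩
  · show (0 : K ⟶ FpZero) ≫ (Iso.refl FpZero).hom ≫ (0 : FpZero ⟶ Q) = i ≫ p
    rw [hip, Limits.zero_comp]
  · exact isZero_FpZero

end FpTransfer

end CohProof

open CohProof in
/-- If `C` has enough projectives, then every coherent functor `F` admits an
injective resolution `0 → F → I⁰ → I¹ → I² → 0` of length at most 2 in `fp(C, Ab)`, with each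
`Iʲ` an injective object of `fp(C, Ab)` (exactness computed in `(C, Ab)`, into which the
inclusion of `fp(C, Ab)` is exact). In particular `fp(C, Ab)` has enough injectives and every
coherent functor has injective dimension at most 2. -/
theorem coherent_has_injective_resolution_of_enoughProjectives
    [EnoughProjectives C] (F : Fp C) :
    ∃ (I₀ I₁ I₂ : Fp C) (a : F ⟶ I₀) (b : I₀ ⟶ I₁) (c : I₁ ⟶ I₂)
      (h₁ : (a.hom : F.obj ⟶ I₀.obj) ≫ (b.hom : I₀.obj ⟶ I₁.obj) = 0)
      (h₂ : (b.hom : I₀.obj ⟶ I₁.obj) ≫ (c.hom : I₁.obj ⟶ I₂.obj) = 0),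
      Injective I₀ ∧ Injective I₁ ∧ Injective I₂ ∧
      Mono (a.hom : F.obj ⟶ I₀.obj) ∧ Epi (c.hom : I₁.obj ⟶ I₂.obj) ∧
      (ShortComplex.mk (a.hom : F.obj ⟶ I₀.obj) (b.hom : I₀.obj ⟶ I₁.obj) h₁).Exact ∧
      (ShortComplex.mk (b.hom : I₀.obj ⟶ I₁.obj) (c.hom : I₁.obj ⟶ I₂.obj) h₂).Exact := by
  obtain ⟨X, Y, f, α, w, hα, hex⟩ := F.property
  haveI := hα
  obtain ⟨P₀, Q₀, hP₀, hQ₀, e₀, u₀, g₀, hu₀, comm₀, fac₀⟩ := step f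
  haveI := hu₀
  let I₀ : Fp C := ⟨Hq g₀, coherent_Hq g₀⟩
  -- the map a
  have h0 : hm f ≫ (hm u₀ ≫ pih g₀) = 0 := by
    rw [← Category.assoc]
    have e : hm f ≫ hm u₀ = hm e₀ ≫ hm g₀ := by
      rw [← hm_comp, ← hm_comp, comm₀]
    rw [e, Category.assoc, hm_pih, Limits.comp_zero]
  haveI : Epi (ShortComplex.mk (hm f) α w).g := hα
  obtain ⟨a₀, ha₀⟩ := CokernelCofork.IsColimit.desc' hex.gIsCokernel (hm u₀ ≫ pih g₀) h0
  have ha₀app : ∀ (A : C) (ψ : (hF X).obj A),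
      a₀.app A (α.app A ψ) = QuotientAddGroup.mk (u₀ ≫ (ψ : X ⟶ A)) :=
    fun A ψ => congrArg (fun m : hF X ⟶ Hq g₀ => m.app A ψ) ha₀
  -- a is (pointwise) mono
  have hmonoa : ∀ A : C, Function.Injective (a₀.app A) := by
    intro A
    rw [injective_iff_map_eq_zero]
    intro x hx
    obtain ⟨ψ, hψ⟩ := pw_surj α A x
    rw [← hψ] at hx ⊢
    rw [ha₀app A ψ] at hx
    obtain ⟨χψ, hχψ0⟩ := (QuotientAddGroup.eq_zero_iff _).mp hx
    have hχψ : g₀ ≫ χψ = u₀ ≫ (ψ : X ⟶ A) := hχψ0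
    obtain ⟨χ, hχ⟩ := fac₀ (ψ : X ⟶ A) χψ hχψ.symm
    have e2 : α.app A ψ = α.app A ((hm f).app A χ) := by
      congr 1
      exact hχ.symm
    rw [e2]
    have := congrArg (fun m : hF Y ⟶ F.obj => m.app A χ) w
    exact this
  haveI : ∀ A : C, Mono (a₀.app A) :=
    fun A => (AddCommGrpCat.mono_iff_injective _).mpr (hmonoa A)
  haveI hMa : Mono a₀ := NatTrans.mono_of_mono_app a₀
  -- stage 1
  let v₀ : Q₀ ⟶ P₀ ⊞ X := biprod.lift g₀ u₀
  have hv₀ : v₀ = g₀ ≫ biprod.inl + u₀ ≫ biprod.inr := by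
    apply biprod.hom_ext <;> simp [v₀]
  have hrng0 : ∀ (A : C) (θ : Q₀ ⟶ A), θ ∈ rng g₀ A → 𝟙 Q₀ ≫ θ ∈ rng v₀ A := by
    rintro A θ ⟨ψ, rfl⟩
    refine ⟨biprod.desc ψ 0, ?_⟩
    show v₀ ≫ biprod.desc ψ 0 = 𝟙 Q₀ ≫ g₀ ≫ ψ
    simp [v₀]
  let q : Hq g₀ ⟶ Hq v₀ := HqMap g₀ v₀ (𝟙 Q₀) hrng0
  obtain ⟨P₁, Q₁, hP₁, hQ₁, e₁, u₁, g₁, hu₁, comm₁, fac₁⟩ := step v₀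
  haveI := hu₁
  let I₁ : Fp C := ⟨Hq g₁, coherent_Hq g₁⟩
  have hrng1 : ∀ (A : C) (θ : Q₀ ⟶ A), θ ∈ rng v₀ A → u₁ ≫ θ ∈ rng g₁ A := by
    rintro A θ ⟨μ, rfl⟩
    refine ⟨e₁ ≫ μ, ?_⟩
    show g₁ ≫ e₁ ≫ μ = u₁ ≫ v₀ ≫ μ
    rw [← Category.assoc, ← comm₁, Category.assoc]
  let b' : Hq v₀ ⟶ Hq g₁ := HqMap v₀ g₁ u₁ hrng1
  let b₀ : Hq g₀ ⟶ Hq g₁ := q ≫ b'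
  -- stage 2
  let v₁ : Q₁ ⟶ P₁ ⊞ Q₀ := biprod.lift g₁ u₁
  have hv₁ : v₁ = g₁ ≫ biprod.inl + u₁ ≫ biprod.inr := by
    apply biprod.hom_ext <;> simp [v₁]
  let I₂ : Fp C := ⟨Hq v₁, coherent_Hq v₁⟩
  have hrng2 : ∀ (A : C) (θ : Q₁ ⟶ A), θ ∈ rng g₁ A → 𝟙 Q₁ ≫ θ ∈ rng v₁ A := by
    rintro A θ ⟨ψ, rfl⟩
    refine ⟨biprod.desc ψ 0, ?_⟩
    show v₁ ≫ biprod.desc ψ 0 = 𝟙 Q₁ ≫ g₁ ≫ ψ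
    simp [v₁]
  let c₀ : Hq g₁ ⟶ Hq v₁ := HqMap g₁ v₁ (𝟙 Q₁) hrng2
  -- the differentials compose to zero
  have h₁ : a₀ ≫ b₀ = 0 := by
    rw [← cancel_epi α]
    apply NatTrans.ext; funext A
    refine AddCommGrpCat.ext (fun (ψ : X ⟶ A) => ?_)
    show b₀.app A (a₀.app A (α.app A ψ)) = 0
    rw [ha₀app A ψ]
    show (QuotientAddGroup.mk (u₁ ≫ 𝟙 Q₀ ≫ u₀ ≫ (ψ : X ⟶ A)) : (Hq g₁).obj A) = 0
    rw [Category.id_comp]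
    have hmem : u₀ ≫ (ψ : X ⟶ A) ∈ rng v₀ A := by
      refine ⟨biprod.desc 0 (ψ : X ⟶ A), ?_⟩
      show v₀ ≫ biprod.desc 0 (ψ : X ⟶ A) = u₀ ≫ (ψ : X ⟶ A)
      simp [v₀]
    obtain ⟨σ, hσ0⟩ := hrng1 A _ hmem
    exact Hq_mk_eq_zero g₁ _ σ hσ0
  have h₂ : b₀ ≫ c₀ = 0 := by
    apply NatTrans.ext; funext A
    refine AddCommGrpCat.ext (fun x => QuotientAddGroup.induction_on x (fun θ => ?_))
    show (QuotientAddGroup.mk (𝟙 Q₁ ≫ u₁ ≫ 𝟙 Q₀ ≫ θ) : (Hq v₁).obj A) = 0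
    rw [Category.id_comp, Category.id_comp]
    refine Hq_mk_eq_zero v₁ _ (biprod.desc 0 θ) ?_
    show v₁ ≫ biprod.desc 0 θ = u₁ ≫ θ
    simp [v₁]
  -- epi c
  haveI hepicapp : ∀ A : C, Epi (c₀.app A) := by
    intro A
    refine (AddCommGrpCat.epi_iff_surjective _).mpr (fun x => ?_)
    refine QuotientAddGroup.induction_on x (fun θ => ⟨QuotientAddGroup.mk θ, ?_⟩)
    show (QuotientAddGroup.mk (𝟙 Q₁ ≫ θ) : (Hq v₁).obj A) = QuotientAddGroup.mk θ
    rw [Category.id_comp]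
  haveI hepic : Epi c₀ := NatTrans.epi_of_epi_app c₀
  -- exactness at I₀
  have hex1 : (ShortComplex.mk (a₀ : F.obj ⟶ (Hq g₀)) b₀ h₁).Exact := by
    refine exact_of_pw _ (fun A x => ?_)
    refine QuotientAddGroup.induction_on x (fun θ hx => ?_)
    have hx' : (QuotientAddGroup.mk (u₁ ≫ 𝟙 Q₀ ≫ θ) : (Hq g₁).obj A) = 0 := hx
    rw [Category.id_comp] at hx'
    obtain ⟨ψ1, hψ10⟩ := (QuotientAddGroup.eq_zero_iff _).mp hx'
    have hψ1 : g₁ ≫ ψ1 = u₁ ≫ θ := hψ10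
    obtain ⟨χ, hχ⟩ := fac₁ θ ψ1 hψ1.symm
    refine ⟨α.app A (biprod.inr ≫ χ), ?_⟩
    show a₀.app A (α.app A (biprod.inr ≫ χ)) = QuotientAddGroup.mk θ
    rw [ha₀app A (biprod.inr ≫ χ)]
    refine Hq_mk_eq_of g₀ _ _ (-(biprod.inl ≫ χ)) ?_
    rw [← hχ, hv₀]
    simp [Preadditive.add_comp, Category.assoc]
  -- exactness at I₁
  have hex2 : (ShortComplex.mk (b₀ : (Hq g₀) ⟶ (Hq g₁)) c₀ h₂).Exact := by
    refine exact_of_pw _ (fun A x => ?_)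
    refine QuotientAddGroup.induction_on x (fun μ hx => ?_)
    have hx' : (QuotientAddGroup.mk (𝟙 Q₁ ≫ μ) : (Hq v₁).obj A) = 0 := hx
    rw [Category.id_comp] at hx'
    obtain ⟨w', hw0⟩ := (QuotientAddGroup.eq_zero_iff _).mp hx'
    have hw : v₁ ≫ w' = μ := hw0
    refine ⟨QuotientAddGroup.mk (biprod.inr ≫ w'), ?_⟩
    show (QuotientAddGroup.mk (u₁ ≫ 𝟙 Q₀ ≫ biprod.inr ≫ w') : (Hq g₁).obj A) =
      QuotientAddGroup.mk μ
    rw [Category.id_comp]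
    refine Hq_mk_eq_of g₁ _ _ (-(biprod.inl ≫ w')) ?_
    rw [← hw, hv₁]
    simp [Preadditive.add_comp, Category.assoc]
  -- ambient: q is a cokernel of a₀
  let Qv₀ : Fp C := ⟨Hq v₀, coherent_Hq v₀⟩
  have waq : a₀ ≫ q = 0 := by
    rw [← cancel_epi α]
    apply NatTrans.ext; funext A
    refine AddCommGrpCat.ext (fun (ψ : X ⟶ A) => ?_)
    show q.app A (a₀.app A (α.app A ψ)) = 0
    rw [ha₀app A ψ]
    show (QuotientAddGroup.mk (𝟙 Q₀ ≫ u₀ ≫ (ψ : X ⟶ A)) : (Hq v₀).obj A) = 0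
    rw [Category.id_comp]
    refine Hq_mk_eq_zero v₀ _ (biprod.desc 0 (ψ : X ⟶ A)) ?_
    show v₀ ≫ biprod.desc 0 (ψ : X ⟶ A) = u₀ ≫ (ψ : X ⟶ A)
    simp [v₀]
  haveI hqe : ∀ A : C, Epi (q.app A) := by
    intro A
    refine (AddCommGrpCat.epi_iff_surjective _).mpr (fun x => ?_)
    refine QuotientAddGroup.induction_on x (fun θ => ⟨QuotientAddGroup.mk θ, ?_⟩)
    show (QuotientAddGroup.mk (𝟙 Q₀ ≫ θ) : (Hq v₀).obj A) = QuotientAddGroup.mk θ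
    rw [Category.id_comp]
  haveI hqepi : Epi q := NatTrans.epi_of_epi_app q
  have hexq : (ShortComplex.mk a₀ q waq).Exact := by
    refine exact_of_pw _ (fun A x => ?_)
    refine QuotientAddGroup.induction_on x (fun θ hx => ?_)
    have hx' : (QuotientAddGroup.mk (𝟙 Q₀ ≫ θ) : (Hq v₀).obj A) = 0 := hx
    rw [Category.id_comp] at hx'
    obtain ⟨χ, hχ0⟩ := (QuotientAddGroup.eq_zero_iff _).mp hx'
    have hχ : v₀ ≫ χ = θ := hχ0
    refine ⟨α.app A (biprod.inr ≫ χ), ?_⟩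
    show a₀.app A (α.app A (biprod.inr ≫ χ)) = QuotientAddGroup.mk θ
    rw [ha₀app A (biprod.inr ≫ χ)]
    refine Hq_mk_eq_of g₀ _ _ (-(biprod.inl ≫ χ)) ?_
    rw [← hχ, hv₀]
    simp [Preadditive.add_comp, Category.assoc]
  haveI : Epi (ShortComplex.mk a₀ q waq).g := hqepi
  have hqcoker := hexq.gIsCokernel
  -- ambient: a₀ is a kernel of b₀
  haveI : Mono (ShortComplex.mk a₀ b₀ h₁).f := hMa
  have hakernel := hex1.fIsKernel
  -- ambient: b' is mono
  have hmonob' : ∀ A : C, Function.Injective (b'.app A) := by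
    intro A
    rw [injective_iff_map_eq_zero]
    intro x
    refine QuotientAddGroup.induction_on x (fun θ hx => ?_)
    have hx' : (QuotientAddGroup.mk (u₁ ≫ θ) : (Hq g₁).obj A) = 0 := hx
    obtain ⟨ψ, hψ0⟩ := (QuotientAddGroup.eq_zero_iff _).mp hx'
    have hψ : g₁ ≫ ψ = u₁ ≫ θ := hψ0
    obtain ⟨χ, hχ⟩ := fac₁ θ ψ hψ.symm
    exact Hq_mk_eq_zero v₀ θ χ hχ
  haveI : ∀ A : C, Mono (b'.app A) :=
    fun A => (AddCommGrpCat.mono_iff_injective _).mpr (hmonob' A)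
  haveI hmb' : Mono b' := NatTrans.mono_of_mono_app b'
  -- ambient: b' is a kernel of c₀
  have wbc' : b' ≫ c₀ = 0 := by
    apply NatTrans.ext; funext A
    refine AddCommGrpCat.ext (fun x => QuotientAddGroup.induction_on x (fun θ => ?_))
    show (QuotientAddGroup.mk (𝟙 Q₁ ≫ u₁ ≫ θ) : (Hq v₁).obj A) = 0
    rw [Category.id_comp]
    refine Hq_mk_eq_zero v₁ _ (biprod.desc 0 θ) ?_
    show v₁ ≫ biprod.desc 0 θ = u₁ ≫ θ
    simp [v₁]
  have hexb' : (ShortComplex.mk b' c₀ wbc').Exact := by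
    refine exact_of_pw _ (fun A x => ?_)
    refine QuotientAddGroup.induction_on x (fun μ hx => ?_)
    have hx' : (QuotientAddGroup.mk (𝟙 Q₁ ≫ μ) : (Hq v₁).obj A) = 0 := hx
    rw [Category.id_comp] at hx'
    obtain ⟨w', hw0⟩ := (QuotientAddGroup.eq_zero_iff _).mp hx'
    have hw : v₁ ≫ w' = μ := hw0
    refine ⟨QuotientAddGroup.mk (biprod.inr ≫ w'), ?_⟩
    show (QuotientAddGroup.mk (u₁ ≫ biprod.inr ≫ w') : (Hq g₁).obj A) = QuotientAddGroup.mk μ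
    refine Hq_mk_eq_of g₁ _ _ (-(biprod.inl ≫ w')) ?_
    rw [← hw, hv₁]
    simp [Preadditive.add_comp, Category.assoc]
  haveI : Mono (ShortComplex.mk b' c₀ wbc').f := hmb'
  have hb'kernel := hexb'.fIsKernel
  -- ambient: c₀ is a cokernel of b₀
  haveI : Epi (ShortComplex.mk b₀ c₀ h₂).g := hepic
  have hccoker := hex2.gIsCokernel
  -- now assemble everything in `Fp C`
  refine ⟨I₀, I₁, I₂, ObjectProperty.homMk a₀, ObjectProperty.homMk b₀, ObjectProperty.homMk c₀, h₁, h₂,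
    injective_Hq hQ₀ hP₀ g₀, injective_Hq hQ₁ hP₁ g₁,
    injective_Hq hQ₁ (projective_biprod hP₁ hQ₀) v₁,
    hMa, hepic, ?_, ?_⟩
  · exact hex1
  · exact hex2
end
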